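/- arXiv:2103.09722 — 5 statements merged into one kernel-verified Lean document; each statement's English description precedes it below -/
import Mathlib

section
/- Let q ≥ 2 be odd and let (P, L) be a finite projective plane of order q. Consider vectors x : L → F₂ such that for every point p ∈ P the sum Σ_{ℓ ∈ L, p ∈ ℓ} x(ℓ) equals 0 in F₂ (i.e., x lies in the right kernel of the incidence matrix over F₂). Then the only such vectors are the zero vector and the all-ones vector. In particular this kernel is a 1-dimensional F₂-subspace and its unique nonzero element has Hamming weight q²+q+1. -/
/-- A finite projective plane of order `q`, given by its set of lines (each line a
finite set of points of the ambient point type `P`): any two distinct points lie on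
exactly one common line, any two distinct lines meet in exactly one point, there are
four points no three of which are collinear, and every line has `q + 1` points. -/
structure IsProjectivePlane (q : ℕ) {P : Type} [DecidableEq P] (L : Finset (Finset P)) : Prop where
  exists_unique_line : ∀ p₁ p₂ : P, p₁ ≠ p₂ → ∃! ℓ, ℓ ∈ L ∧ p₁ ∈ ℓ ∧ p₂ ∈ ℓ
  exists_unique_point : ∀ ℓ₁ ∈ L, ∀ ℓ₂ ∈ L, ℓ₁ ≠ ℓ₂ → ∃! p, p ∈ ℓ₁ ∧ p ∈ ℓ₂
  nondeg : ∃ a b c d : P, a ≠ b ∧ a ≠ c ∧ a ≠ d ∧ b ≠ c ∧ b ≠ d ∧ c ≠ d ∧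
      ∀ ℓ ∈ L, (ℓ ∩ ({a, b, c, d} : Finset P)).card ≤ 2
  card_line : ∀ ℓ ∈ L, ℓ.card = q + 1

/-- An oval: a set of `q + 1` points such that every line contains at most two of them. -/
def IsOval (q : ℕ) {P : Type} [DecidableEq P] (L : Finset (Finset P)) (O : Finset P) : Prop :=
  O.card = q + 1 ∧ ∀ ℓ ∈ L, (ℓ ∩ O).card ≤ 2

/-- A projective bundle: a set of `q² + q + 1` ovals, any two of which meet in
exactly one point. -/
def IsProjectiveBundle (q : ℕ) {P : Type} [DecidableEq P] (L : Finset (Finset P))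
    (B : Finset (Finset P)) : Prop :=
  B.card = q ^ 2 + q + 1 ∧ (∀ o ∈ B, IsOval q L o) ∧
    ∀ o₁ ∈ B, ∀ o₂ ∈ B, o₁ ≠ o₂ → (o₁ ∩ o₂).card = 1

section Aux

variable {q : ℕ} {P : Type} [DecidableEq P] {L : Finset (Finset P)}

/-- Two distinct lines meet in exactly one point. -/
lemma PP.inter_card (hL : IsProjectivePlane q L) {ℓ₁ ℓ₂ : Finset P}
    (h₁ : ℓ₁ ∈ L) (h₂ : ℓ₂ ∈ L) (hne : ℓ₁ ≠ ℓ₂) : (ℓ₁ ∩ ℓ₂).card = 1 := by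
  obtain ⟨p, hp, hu⟩ := hL.exists_unique_point ℓ₁ h₁ ℓ₂ h₂ hne
  rw [Finset.card_eq_one]
  refine ⟨p, ?_⟩
  ext r
  simp only [Finset.mem_inter, Finset.mem_singleton]
  constructor
  · intro hr; exact hu r hr
  · rintro rfl; exact hp

/-- Existence of a line through two distinct points. -/
lemma PP.line_exists (hL : IsProjectivePlane q L) {a b : P} (hab : a ≠ b) :
    ∃ ℓ, ℓ ∈ L ∧ a ∈ ℓ ∧ b ∈ ℓ :=
  (hL.exists_unique_line a b hab).exists

/-- For every point there is a line not containing it. -/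
lemma PP.exists_notMem (hL : IsProjectivePlane q L) (p : P) : ∃ ℓ ∈ L, p ∉ ℓ := by
  obtain ⟨a, b, c, d, hab, hac, had, hbc, hbd, hcd, hbound⟩ := hL.nondeg
  have key : ∀ ℓ ∈ L, ∀ x y z : P, x ∈ ({a,b,c,d} : Finset P) → y ∈ ({a,b,c,d} : Finset P) →
      z ∈ ({a,b,c,d} : Finset P) → x ≠ y → x ≠ z → y ≠ z → x ∈ ℓ → y ∈ ℓ → z ∉ ℓ := by
    intro ℓ hℓ x y z hx hy hz hxy hxz hyz hxl hyl hzl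
    have hsub : ({x, y, z} : Finset P) ⊆ ℓ ∩ ({a,b,c,d} : Finset P) := by
      intro t ht
      simp only [Finset.mem_insert, Finset.mem_singleton] at ht
      rcases ht with rfl | rfl | rfl <;> simp_all [Finset.mem_inter]
    have hc3 : ({x, y, z} : Finset P).card = 3 := by
      rw [Finset.card_insert_of_notMem (by simp [hxy, hxz]),
        Finset.card_insert_of_notMem (by simp [hyz]), Finset.card_singleton]
    have := (Finset.card_le_card hsub).trans (hbound ℓ hℓ)
    omega
  obtain ⟨ℓab, hℓab, haab, hbab⟩ := PP.line_exists hL hab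
  obtain ⟨ℓcd, hℓcd, hccd, hdcd⟩ := PP.line_exists hL hcd
  obtain ⟨ℓac, hℓac, haac, hcac⟩ := PP.line_exists hL hac
  by_cases h1 : p ∈ ℓab
  · by_cases h2 : p ∈ ℓcd
    · refine ⟨ℓac, hℓac, fun h3 => ?_⟩
      have hacd : a ∉ ℓcd := key ℓcd hℓcd c d a (by simp) (by simp) (by simp)
        hcd hac.symm had.symm hccd hdcd
      have hpa : p ≠ a := fun h => hacd (h ▸ h2)
      have hcab : c ∉ ℓab := key ℓab hℓab a b c (by simp) (by simp) (by simp)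
        hab hac hbc haab hbab
      obtain ⟨m, _, hum⟩ := hL.exists_unique_line a p hpa.symm
      have e1 : ℓab = m := hum ℓab ⟨hℓab, haab, h1⟩
      have e2 : ℓac = m := hum ℓac ⟨hℓac, haac, h3⟩
      exact hcab ((e1.trans e2.symm) ▸ hcac)
    · exact ⟨ℓcd, hℓcd, h2⟩
  · exact ⟨ℓab, hℓab, h1⟩

/-- Every point lies on exactly `q + 1` lines. -/
lemma PP.pencil_card (hL : IsProjectivePlane q L) (p : P) :
    (L.filter (fun ℓ => p ∈ ℓ)).card = q + 1 := by
  obtain ⟨ℓ, hℓ, hpℓ⟩ := PP.exists_notMem hL p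
  rw [← hL.card_line ℓ hℓ]
  symm
  apply Finset.card_bij (fun r hr => (hL.exists_unique_line p r
    (fun h => hpℓ (h ▸ hr))).choose)
  · intro r hr
    have hs := (hL.exists_unique_line p r (fun h => hpℓ (h ▸ hr))).choose_spec.1
    simp only [Finset.mem_filter]
    exact ⟨hs.1, hs.2.1⟩
  · intro r₁ hr₁ r₂ hr₂ heq
    set m := (hL.exists_unique_line p r₁ (fun h => hpℓ (h ▸ hr₁))).choose with hm
    have hs₁ := (hL.exists_unique_line p r₁ (fun h => hpℓ (h ▸ hr₁))).choose_spec.1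
    have hs₂ := (hL.exists_unique_line p r₂ (fun h => hpℓ (h ▸ hr₂))).choose_spec.1
    rw [← heq] at hs₂
    have hmne : m ≠ ℓ := fun h => hpℓ (h ▸ hs₁.2.1)
    obtain ⟨s, _, hus⟩ := hL.exists_unique_point m hs₁.1 ℓ hℓ hmne
    have e1 : r₁ = s := hus r₁ ⟨hs₁.2.2, hr₁⟩
    have e2 : r₂ = s := hus r₂ ⟨hs₂.2.2, hr₂⟩
    rw [e1, e2]
  · intro m hm
    simp only [Finset.mem_filter] at hm
    have hmne : m ≠ ℓ := fun h => hpℓ (h ▸ hm.2)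
    obtain ⟨r, ⟨hrm, hrℓ⟩, _⟩ := hL.exists_unique_point m hm.1 ℓ hℓ hmne
    refine ⟨r, hrℓ, ?_⟩
    exact ((hL.exists_unique_line p r (fun h => hpℓ (h ▸ hrℓ))).choose_spec.2 m
      ⟨hm.1, hm.2, hrm⟩).symm

/-- The number of lines is `q² + q + 1`. -/
lemma PP.card_L (hL : IsProjectivePlane q L) : L.card = q ^ 2 + q + 1 := by
  obtain ⟨a, b, c, d, hab, _⟩ := hL.nondeg
  obtain ⟨ℓ₀, hℓ₀, ha₀, hb₀⟩ := PP.line_exists hL hab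
  have key : L.erase ℓ₀ = ℓ₀.biUnion (fun r => (L.filter (fun m => r ∈ m)).erase ℓ₀) := by
    ext m
    simp only [Finset.mem_erase, Finset.mem_biUnion, Finset.mem_filter]
    constructor
    · rintro ⟨hne, hm⟩
      obtain ⟨r, ⟨hr₀, hrm⟩, _⟩ := hL.exists_unique_point ℓ₀ hℓ₀ m hm (Ne.symm hne)
      exact ⟨r, hr₀, hne, hm, hrm⟩
    · rintro ⟨r, _, hne, hm, _⟩
      exact ⟨hne, hm⟩
  have hdisj : ∀ r₁ ∈ ℓ₀, ∀ r₂ ∈ ℓ₀, r₁ ≠ r₂ →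
      Disjoint ((L.filter (fun m => r₁ ∈ m)).erase ℓ₀) ((L.filter (fun m => r₂ ∈ m)).erase ℓ₀) := by
    intro r₁ hr₁ r₂ hr₂ hne
    rw [Finset.disjoint_left]
    intro m hm₁ hm₂
    simp only [Finset.mem_erase, Finset.mem_filter] at hm₁ hm₂
    have h1 : (ℓ₀ ∩ m).card = 1 := PP.inter_card hL hℓ₀ hm₁.2.1 (Ne.symm hm₁.1)
    have hsub : ({r₁, r₂} : Finset P) ⊆ ℓ₀ ∩ m := by
      intro t ht
      simp only [Finset.mem_insert, Finset.mem_singleton] at ht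
      rcases ht with rfl | rfl <;> simp_all [Finset.mem_inter]
    have h2 : ({r₁, r₂} : Finset P).card = 2 := by
      rw [Finset.card_insert_of_notMem (by simp [hne]), Finset.card_singleton]
    have := Finset.card_le_card hsub
    omega
  have hsum : (L.erase ℓ₀).card = ∑ r ∈ ℓ₀, ((L.filter (fun m => r ∈ m)).erase ℓ₀).card := by
    rw [key, Finset.card_biUnion hdisj]
  have hterm : ∀ r ∈ ℓ₀, ((L.filter (fun m => r ∈ m)).erase ℓ₀).card = q := by
    intro r hr
    rw [Finset.card_erase_of_mem (by simp [Finset.mem_filter, hℓ₀, hr]),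
      PP.pencil_card hL r]
    omega
  rw [Finset.sum_congr rfl hterm, Finset.sum_const, smul_eq_mul, hL.card_line ℓ₀ hℓ₀] at hsum
  have hcard : L.card = (L.erase ℓ₀).card + 1 := by
    rw [Finset.card_erase_of_mem hℓ₀]
    have : 1 ≤ L.card := Finset.card_pos.mpr ⟨ℓ₀, hℓ₀⟩
    omega
  rw [hcard, hsum]
  ring

end Aux

/-- For a finite projective plane of odd order `q ≥ 2`, the right kernel over
`F₂` of the point-line incidence matrix consists exactly of the zero vector and the
all-ones vector; the unique nonzero element has Hamming weight `q² + q + 1` (which is the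
number of lines), so the kernel is a 1-dimensional `F₂`-subspace. -/
theorem statement_1 (q : ℕ) (hq : 2 ≤ q) (hodd : Odd q) (P : Type) [Fintype P] [DecidableEq P]
    (L : Finset (Finset P)) (hL : IsProjectivePlane q L) :
    {x : {ℓ // ℓ ∈ L} → ZMod 2 |
        ∀ p : P, (∑ ℓ : {ℓ // ℓ ∈ L}, if p ∈ ℓ.1 then x ℓ else 0) = 0} =
      {0, fun _ => 1} ∧
    hammingNorm (fun _ : {ℓ // ℓ ∈ L} => (1 : ZMod 2)) = q ^ 2 + q + 1 := by
  have hzmod : ∀ a : ZMod 2, a = 0 ∨ a = 1 := by decide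
  have hq1even : Even (q + 1) := by
    obtain ⟨k, hk⟩ := hodd; exact ⟨k + 1, by omega⟩
  -- counting the pencil through a point via the subtype
  have hpencil : ∀ p : P,
      (Finset.univ.filter (fun ℓ : {ℓ // ℓ ∈ L} => p ∈ ℓ.1)).card
        = q + 1 := by
    intro p
    rw [Finset.univ_eq_attach, ← PP.pencil_card hL p]
    apply Finset.card_bij (fun a _ => a.1)
    · intro a ha
      simp only [Finset.mem_filter, Finset.mem_attach, true_and] at ha
      simp [Finset.mem_filter, a.2, ha]
    · intro a _ b _ h; exact Subtype.ext h
    · intro m hm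
      simp only [Finset.mem_filter] at hm
      exact ⟨⟨m, hm.1⟩, by simp [hm.2], rfl⟩
  constructor
  · ext x
    simp only [Set.mem_setOf_eq, Set.mem_insert_iff, Set.mem_singleton_iff]
    constructor
    · intro hx
      by_contra hcon
      push_neg at hcon
      obtain ⟨hx0, hx1⟩ := hcon
      set S : Finset {ℓ // ℓ ∈ L} := Finset.univ.filter (fun ℓ => x ℓ = 1) with hS
      -- each point lies on an even number of lines of S
      have heven : ∀ p : P, Even (S.filter (fun m => p ∈ m.1)).card := by
        intro p
        have h1 := hx p
        have h2 : ∀ ℓ : {ℓ // ℓ ∈ L}, (if p ∈ ℓ.1 then x ℓ else 0)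
            = if x ℓ = 1 ∧ p ∈ ℓ.1 then (1 : ZMod 2) else 0 := by
          intro ℓ
          rcases hzmod (x ℓ) with h | h <;> by_cases hp : p ∈ ℓ.1 <;> simp [h, hp]
        rw [Finset.sum_congr rfl (fun ℓ _ => h2 ℓ), Finset.sum_boole] at h1
        have h3 : (Finset.univ.filter (fun ℓ : {ℓ // ℓ ∈ L} => x ℓ = 1 ∧ p ∈ ℓ.1))
            = S.filter (fun m => p ∈ m.1) := by
          rw [hS, Finset.filter_filter]
        rw [h3] at h1
        exact even_iff_two_dvd.mpr ((ZMod.natCast_eq_zero_iff _ 2).mp h1)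
      -- the swap of the double count
      have hswap : ∀ ℓ : {ℓ // ℓ ∈ L},
          ∑ p ∈ ℓ.1, (S.filter (fun m => p ∈ m.1)).card
            = ∑ m ∈ S, (ℓ.1 ∩ m.1).card := by
        intro ℓ
        have lhs : ∀ p ∈ ℓ.1, (S.filter (fun m => p ∈ m.1)).card
            = ∑ m ∈ S, if p ∈ m.1 then 1 else 0 := fun p _ => Finset.card_filter _ _
        have rhs : ∀ m ∈ S, (ℓ.1 ∩ m.1).card = ∑ p ∈ ℓ.1, if p ∈ m.1 then 1 else 0 := by
          intro m _
          rw [← Finset.card_filter]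
          congr 1
        rw [Finset.sum_congr rfl lhs, Finset.sum_congr rfl rhs, Finset.sum_comm]
      obtain ⟨ℓ₁, hℓ₁⟩ : ∃ ℓ, x ℓ = 1 := by
        by_contra h
        push_neg at h
        exact hx0 (funext fun ℓ => (hzmod (x ℓ)).resolve_right (h ℓ))
      obtain ⟨ℓ₀, hℓ₀⟩ : ∃ ℓ, x ℓ = 0 := by
        by_contra h
        push_neg at h
        exact hx1 (funext fun ℓ => (hzmod (x ℓ)).resolve_left (h ℓ))
      have hℓ₁S : ℓ₁ ∈ S := by simp [hS, hℓ₁]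
      have hℓ₀S : ℓ₀ ∉ S := by simp [hS, hℓ₀]
      -- |S| is even
      have hSeven : Even S.card := by
        have h1 : ∑ m ∈ S, (ℓ₀.1 ∩ m.1).card = S.card := by
          rw [Finset.card_eq_sum_ones S]
          apply Finset.sum_congr rfl
          intro m hm
          have hmne : ℓ₀.1 ≠ m.1 := fun h => hℓ₀S (by rw [show ℓ₀ = m from Subtype.ext h]; exact hm)
          exact PP.inter_card hL ℓ₀.2 m.2 hmne
        rw [← h1, ← hswap ℓ₀]
        exact Finset.even_sum _ (fun p _ => heven p)
      -- but it is also odd, contradiction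
      have hSodd : Odd (∑ m ∈ S, (ℓ₁.1 ∩ m.1).card) := by
        rw [← Finset.add_sum_erase S _ hℓ₁S]
        have hself : (ℓ₁.1 ∩ ℓ₁.1).card = q + 1 := by
          rw [Finset.inter_self]; exact hL.card_line ℓ₁.1 ℓ₁.2
        have hrest : ∑ m ∈ S.erase ℓ₁, (ℓ₁.1 ∩ m.1).card = S.card - 1 := by
          rw [← Finset.card_erase_of_mem hℓ₁S, Finset.card_eq_sum_ones]
          apply Finset.sum_congr rfl
          intro m hm
          have hmne : ℓ₁.1 ≠ m.1 := fun h =>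
            (Finset.mem_erase.mp hm).1 (Subtype.ext h.symm)
          exact PP.inter_card hL ℓ₁.2 m.2 hmne
        rw [hself, hrest]
        have h1le : 1 ≤ S.card := Finset.card_pos.mpr ⟨ℓ₁, hℓ₁S⟩
        exact hq1even.add_odd (Nat.Even.sub_odd h1le hSeven odd_one)
      rw [← hswap ℓ₁] at hSodd
      have : Even (∑ p ∈ ℓ₁.1, (S.filter (fun m => p ∈ m.1)).card) :=
        Finset.even_sum _ (fun p _ => heven p)
      exact (Nat.not_even_iff_odd.mpr hSodd) this
    · rintro (rfl | rfl)
      · intro p; simp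
      · intro p
        rw [Finset.sum_boole, hpencil p, ZMod.natCast_eq_zero_iff]
        exact hq1even.two_dvd
  · have h1 : hammingNorm (fun _ : {ℓ // ℓ ∈ L} => (1 : ZMod 2))
        = Fintype.card {ℓ // ℓ ∈ L} := by
      simp [hammingNorm]
    rw [h1, Fintype.card_coe, PP.card_L hL]
end

section
/- Let h ≥ 1, q = 2^h, and let F be the finite field with q elements. Let P be the set of 1-dimensional subspaces and L the set of 2-dimensional subspaces of the vector space F³, with a point incident to a line when the 1-dimensional subspace is contained in the 2-dimensional one. Then the F₂-vector space of vectors x : L → F₂ satisfying, for every point p ∈ P, Σ_{ℓ ∈ L, p ⊆ ℓ} x(ℓ) = 0 in F₂, has dimension 2^{2h} − 3^h + 2^h; equivalently, the F₂-rank of the point-line incidence matrix of PG(2,2^h) is 3^h + 1. -/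
set_option linter.unusedSectionVars false
set_option maxHeartbeats 1000000

open Finset Module Submodule Matrix

namespace PG2



variable {K L : Type*} [Field K] [Field L] {m n : Type*} [Fintype m] [Fintype n]

/-- entrywise application of a ring hom, as a semilinear map on pi types -/
def mapPiSL (σ : K →+* L) : (m → K) →ₛₗ[σ] (m → L) where
  toFun v := fun i => σ (v i)
  map_add' v w := by funext i; simp
  map_smul' c v := by funext i; simp [smul_eq_mul]

@[simp] lemma mapPiSL_apply (σ : K →+* L) (v : m → K) (i : m) :
    mapPiSL σ v i = σ (v i) := rfl

lemma linearIndependent_mapPiSL (σ : K →+* L) {ι : Type*} [Fintype ι]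
    {v : ι → (m → K)} (hv : LinearIndependent K v) :
    LinearIndependent L (fun i => mapPiSL σ (v i)) := by
  classical
  -- left inverse over K
  let f : (ι → K) →ₗ[K] (m → K) := Fintype.linearCombination K v
  have hfv : ∀ i, f (Pi.single i 1) = v i := by
    intro i
    simp only [f, Fintype.linearCombination_apply]
    rw [Finset.sum_eq_single i]
    · simp
    · intro b _ hb; simp [Pi.single_apply, hb]
    · simp
  have hker : LinearMap.ker f = ⊥ := by
    rw [LinearMap.ker_eq_bot']
    intro c hc
    have := Fintype.linearIndependent_iff.mp hv c ?_
    · funext i; exact this i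
    · rw [← hc]; simp [f, Fintype.linearCombination_apply]
  obtain ⟨g, hg⟩ := f.exists_leftInverse_of_injective hker
  have hgv : ∀ i, g (v i) = Pi.single i 1 := by
    intro i
    rw [← hfv i, ← LinearMap.comp_apply, hg, LinearMap.id_apply]
  -- matrix of g
  let P : Matrix ι m K := Matrix.of fun j i => g (fun j' => if i = j' then 1 else 0) j
  have hgP : ∀ w : m → K, g w = fun j => ∑ i, P j i * w i := by
    intro w
    rw [LinearMap.pi_apply_eq_sum_univ g w]
    funext j
    simp only [Finset.sum_apply, Pi.smul_apply, smul_eq_mul]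
    exact Finset.sum_congr rfl fun i _ => mul_comm _ _
  -- mapped inverse
  let g' : (m → L) →ₗ[L] (ι → L) := (P.map σ).mulVecLin
  have hcomm : ∀ w : m → K, g' (mapPiSL σ w) = fun j => σ (g w j) := by
    intro w
    funext j
    simp only [g', Matrix.mulVecLin_apply, Matrix.mulVec, dotProduct, Matrix.map_apply,
      mapPiSL_apply]
    rw [hgP w]
    rw [map_sum]
    exact Finset.sum_congr rfl fun i _ => (map_mul σ _ _).symm
  have hfinal : ∀ i, g' (mapPiSL σ (v i)) = Pi.single i 1 := by
    intro i
    rw [hcomm, hgv]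
    funext j
    by_cases hij : j = i <;> simp [Pi.single_apply, hij]
  have hb : LinearIndependent L (fun i : ι => (Pi.single i 1 : ι → L)) := by
    have := (Pi.basisFun L ι).linearIndependent
    convert this using 1
    funext i; simp [Pi.basisFun_apply]
  refine LinearIndependent.of_comp g' ?_
  have : (g' ∘ fun i => mapPiSL σ (v i)) = fun i : ι => (Pi.single i 1 : ι → L) := by
    funext i; exact hfinal i
  rw [this]; exact hb

lemma rank_eq_finrank_span_cols' {R a b : Type*} [Field R] [Fintype b]
    (A : Matrix a b R) : A.rank = finrank R (span R (Set.range Aᵀ)) :=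
  Matrix.rank_eq_finrank_span_cols A

lemma rank_map_field (σ : K →+* L) (M : Matrix m n K) : (M.map σ).rank = M.rank := by
  classical
  obtain ⟨s, hs_sub, hs_span, hs_li⟩ := exists_linearIndependent K (Set.range Mᵀ)
  have hsfin : s.Finite := (Set.finite_range _).subset hs_sub
  haveI := hsfin.fintype
  have hrankM : M.rank = s.toFinset.card := by
    rw [rank_eq_finrank_span_cols', ← hs_span, finrank_span_set_eq_card hs_li]
  -- mapped columns
  have hcols : Set.range (M.map σ)ᵀ = mapPiSL σ '' Set.range Mᵀ := by
    exact (Set.range_comp (mapPiSL σ) (Mᵀ : n → m → K))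
  have himg_span : ∀ x ∈ span K s, mapPiSL σ x ∈ span L (mapPiSL σ '' s) := by
    intro x hx
    induction hx using Submodule.span_induction with
    | mem y hy => exact subset_span ⟨y, hy, rfl⟩
    | zero => rw [map_zero]; exact zero_mem _
    | add y z _ _ hy hz => rw [map_add]; exact add_mem hy hz
    | smul c y _ hy => rw [LinearMap.map_smulₛₗ]; exact smul_mem _ _ hy
  have hspan2 : span L (Set.range (M.map σ)ᵀ) = span L (mapPiSL σ '' s) := by
    apply le_antisymm
    · rw [span_le]
      rintro - ⟨j, rfl⟩
      have : (M.map σ)ᵀ j = mapPiSL σ (Mᵀ j) := by funext i; rfl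
      rw [this]
      exact himg_span _ (hs_span.symm ▸ subset_span (Set.mem_range_self j))
    · rw [span_le]
      rintro - ⟨x, hx, rfl⟩
      have : mapPiSL σ x ∈ Set.range (M.map σ)ᵀ := by
        obtain ⟨j, rfl⟩ := hs_sub hx
        exact ⟨j, rfl⟩
      exact subset_span this
  have hli : LinearIndependent L (fun x : s => mapPiSL σ x.1) :=
    linearIndependent_mapPiSL σ hs_li
  have himg : Set.range (fun x : s => mapPiSL σ x.1) = mapPiSL σ '' s := by
    ext y; simp [Set.mem_image]
  rw [rank_eq_finrank_span_cols', hspan2, ← himg, finrank_span_eq_card hli, hrankM,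
    Set.toFinset_card]





lemma sum_range_two_pow (h : ℕ) : ∑ t ∈ Finset.range h, 2 ^ t = 2 ^ h - 1 := by
  induction h with
  | zero => simp
  | succ n ih =>
    rw [Finset.sum_range_succ, ih]
    have : 0 < 2 ^ n := Nat.pow_pos (by norm_num)
    have : 2 ^ (n + 1) = 2 ^ n + 2 ^ n := by rw [pow_succ]; omega
    omega

lemma two_pow_sum_inj : ∀ (N : ℕ) (A B : Finset ℕ), A ⊆ Finset.range N → B ⊆ Finset.range N →
    (∑ t ∈ A, 2 ^ t) = (∑ t ∈ B, 2 ^ t) → A = B := by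
  intro N
  induction N with
  | zero =>
    intro A B hA hB _
    rw [Finset.range_zero, Finset.subset_empty] at hA hB
    rw [hA, hB]
  | succ N ih =>
    intro A B hA hB hsum
    have key : ∀ C : Finset ℕ, C ⊆ Finset.range (N + 1) →
        C.erase N ⊆ Finset.range N ∧ (∑ t ∈ C.erase N, 2 ^ t) ≤ 2 ^ N - 1 := by
      intro C hC
      have hsub : C.erase N ⊆ Finset.range N := by
        intro t ht
        obtain ⟨hne, htC⟩ := Finset.mem_erase.mp ht
        have := Finset.mem_range.mp (hC htC)
        exact Finset.mem_range.mpr (by omega)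
      refine ⟨hsub, ?_⟩
      calc (∑ t ∈ C.erase N, 2 ^ t) ≤ ∑ t ∈ Finset.range N, 2 ^ t :=
            Finset.sum_le_sum_of_subset hsub
        _ = 2 ^ N - 1 := sum_range_two_pow N
    obtain ⟨hAsub, hAle⟩ := key A hA
    obtain ⟨hBsub, hBle⟩ := key B hB
    have hsplit : ∀ C : Finset ℕ,
        (∑ t ∈ C, 2 ^ t) = (if N ∈ C then 2 ^ N else 0) + ∑ t ∈ C.erase N, 2 ^ t := by
      intro C
      by_cases hN : N ∈ C
      · rw [if_pos hN, Finset.add_sum_erase _ _ hN]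
      · rw [if_neg hN, Finset.erase_eq_of_notMem hN, zero_add]
    rw [hsplit A, hsplit B] at hsum
    have hpos : 0 < 2 ^ N := Nat.pow_pos (by norm_num)
    have hmem : (N ∈ A) ↔ (N ∈ B) := by
      constructor <;> intro hm <;> by_contra hn <;>
        simp only [hm, hn, if_pos, if_neg, if_true, if_false] at hsum <;> omega
    have herase : A.erase N = B.erase N := by
      apply ih _ _ hAsub hBsub
      by_cases hN : N ∈ A
      · have hN' : N ∈ B := hmem.mp hN
        rw [if_pos hN, if_pos hN'] at hsum; omega
      · have hN' : N ∉ B := fun hc => hN (hmem.mpr hc)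
        rw [if_neg hN, if_neg hN'] at hsum; omega
    ext t
    by_cases ht : t = N
    · subst ht; exact hmem
    · constructor <;> intro hm
      · exact Finset.mem_of_mem_erase (herase ▸ Finset.mem_erase.mpr ⟨ht, hm⟩)
      · exact Finset.mem_of_mem_erase (herase ▸ Finset.mem_erase.mpr ⟨ht, hm⟩ : t ∈ A.erase N)

variable {h : ℕ}

/-- exponent vector of the `f`-indexed monomial -/
def ee (f : Fin h → Fin 3) (s : Fin 3) : ℕ :=
  ∑ t ∈ Finset.univ.filter (fun t => f t = s), 2 ^ (t : ℕ)

variable {F : Type} [Field F] [Fintype F]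

/-- the monomial function attached to `f : Fin h → Fin 3` -/
def mu (f : Fin h → Fin 3) (v : Fin 3 → F) : F := ∏ t : Fin h, v (f t) ^ 2 ^ (t : ℕ)

lemma mu_eq_prod_pow (f : Fin h → Fin 3) (v : Fin 3 → F) :
    mu f v = ∏ s : Fin 3, v s ^ ee f s := by
  classical
  rw [mu, ← Finset.prod_fiberwise_of_maps_to (fun t _ => Finset.mem_univ (f t))
    (fun t => v (f t) ^ 2 ^ (t : ℕ))]
  refine Finset.prod_congr rfl fun s _ => ?_
  rw [ee, ← Finset.prod_pow_eq_pow_sum]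
  refine Finset.prod_congr rfl fun t ht => ?_
  rw [(Finset.mem_filter.mp ht).2]

lemma ee_le (f : Fin h → Fin 3) (s : Fin 3) : ee f s ≤ 2 ^ h - 1 := by
  classical
  calc ee f s ≤ ∑ t : Fin h, 2 ^ (t : ℕ) :=
        Finset.sum_le_sum_of_subset (Finset.filter_subset _ _)
    _ = ∑ t ∈ Finset.range h, 2 ^ t := Fin.sum_univ_eq_sum_range _ h
    _ = 2 ^ h - 1 := sum_range_two_pow h

lemma sum_ee (f : Fin h → Fin 3) : ∑ s : Fin 3, ee f s = 2 ^ h - 1 := by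
  classical
  rw [show (∑ s : Fin 3, ee f s) = ∑ t : Fin h, 2 ^ (t : ℕ) from
    Finset.sum_fiberwise_of_maps_to (fun t _ => Finset.mem_univ (f t)) _]
  rw [Fin.sum_univ_eq_sum_range _ h, sum_range_two_pow h]

lemma ee_inj : Function.Injective (ee (h := h)) := by
  classical
  intro f g hfg
  funext t
  have key : ∀ s, (Finset.univ.filter (fun t => f t = s)).image (Fin.val) =
      (Finset.univ.filter (fun t => g t = s)).image (Fin.val) := by
    intro s
    apply two_pow_sum_inj h
    · intro x hx
      obtain ⟨t', _, rfl⟩ := Finset.mem_image.mp hx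
      exact Finset.mem_range.mpr t'.2
    · intro x hx
      obtain ⟨t', _, rfl⟩ := Finset.mem_image.mp hx
      exact Finset.mem_range.mpr t'.2
    · have hf : ∀ (k : Fin h → Fin 3), ∑ x ∈ (Finset.univ.filter (fun t => k t = s)).image Fin.val,
          2 ^ x = ee k s := by
        intro k
        rw [Finset.sum_image (fun a _ b _ hab => Fin.val_injective hab), ee]
      rw [hf f, hf g, hfg]
  have ht : (t : ℕ) ∈ (Finset.univ.filter (fun t' => f t' = f t)).image (Fin.val) :=
    Finset.mem_image.mpr ⟨t, Finset.mem_filter.mpr ⟨Finset.mem_univ t, rfl⟩, rfl⟩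
  rw [key (f t)] at ht
  obtain ⟨t', ht', hv⟩ := Finset.mem_image.mp ht
  have heq : t' = t := Fin.val_injective hv
  rw [heq] at ht'
  exact ((Finset.mem_filter.mp ht').2).symm

lemma mu_smul (f : Fin h → Fin 3) (c : F) (v : Fin 3 → F) :
    mu f (c • v) = c ^ (2 ^ h - 1) * mu f v := by
  rw [mu, mu]
  have : ∀ t : Fin h, (c • v) (f t) ^ 2 ^ (t : ℕ)
      = c ^ 2 ^ (t : ℕ) * v (f t) ^ 2 ^ (t : ℕ) := by
    intro t; rw [Pi.smul_apply, smul_eq_mul, mul_pow]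
  rw [Finset.prod_congr rfl fun t _ => this t, Finset.prod_mul_distrib,
    Finset.prod_pow_eq_pow_sum, Fin.sum_univ_eq_sum_range _ h, sum_range_two_pow h]

lemma mu_zero (hh : 1 ≤ h) (f : Fin h → Fin 3) : mu f (0 : Fin 3 → F) = 0 := by
  rw [mu]
  apply Finset.prod_eq_zero (Finset.mem_univ (⟨0, hh⟩ : Fin h))
  rw [Pi.zero_apply]
  exact zero_pow (Nat.pow_pos (by norm_num)).ne'

/-- linear independence of distinct reduced monomial functions on `F³` -/
lemma mono_li {ι : Type} [Fintype ι] (E : ι → Fin 3 → ℕ) (hinj : Function.Injective E)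
    (hb : ∀ i s, E i s ≤ Fintype.card F - 1) :
    LinearIndependent F (fun i => (fun v : Fin 3 → F => ∏ s : Fin 3, v s ^ E i s)) := by
  classical
  rw [Fintype.linearIndependent_iff]
  intro g hg i
  set d : ι → (Fin 3 →₀ ℕ) := fun i => Finsupp.equivFunOnFinite.symm (E i) with hd
  have hdinj : Function.Injective d := fun a b hab =>
    hinj (Finsupp.equivFunOnFinite.symm.injective hab)
  set p : MvPolynomial (Fin 3) F := ∑ i, MvPolynomial.monomial (d i) (g i) with hp
  have heval : ∀ v : Fin 3 → F, MvPolynomial.eval v p = 0 := by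
    intro v
    have := congrFun hg v
    simp only [Finset.sum_apply, Pi.smul_apply, smul_eq_mul, Pi.zero_apply] at this
    rw [hp, map_sum]
    rw [← this]
    refine Finset.sum_congr rfl fun j _ => ?_
    rw [MvPolynomial.eval_monomial]
    congr 1
    rw [Finsupp.prod_fintype _ _ (fun s => pow_zero _)]
    refine Finset.prod_congr rfl fun s _ => ?_
    rw [hd]; simp [Finsupp.coe_equivFunOnFinite_symm]
  have hmem : p ∈ MvPolynomial.restrictDegree (Fin 3) F (Fintype.card F - 1) := by
    rw [MvPolynomial.mem_restrictDegree]
    intro dd hdd s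
    have : dd ∈ Finset.univ.biUnion (fun j => (MvPolynomial.monomial (d j) (g j)).support) := by
      exact MvPolynomial.support_sum hdd
    obtain ⟨j, _, hj⟩ := Finset.mem_biUnion.mp this
    have : dd = d j := by
      by_cases hgz : g j = 0
      · rw [MvPolynomial.support_monomial] at hj
        simp [hgz] at hj
      · rw [MvPolynomial.support_monomial] at hj
        simp [hgz] at hj
        exact hj
    rw [this]
    simpa [hd, Finsupp.coe_equivFunOnFinite_symm] using hb j s
  have hp0 : p = 0 := MvPolynomial.eq_zero_of_eval_eq_zero _ _ p heval hmem
  have : MvPolynomial.coeff (d i) p = g i := by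
    rw [hp, MvPolynomial.coeff_sum]
    rw [Finset.sum_eq_single i]
    · rw [MvPolynomial.coeff_monomial, if_pos rfl]
    · intro j _ hji
      rw [MvPolynomial.coeff_monomial, if_neg (fun hc => hji (hdinj hc))]
    · intro hc; exact absurd (Finset.mem_univ i) hc
  rw [hp0] at this
  simpa using this.symm

lemma sum_mu_eq_zero (hh : 1 ≤ h) (hF : Fintype.card F = 2 ^ h) (f : Fin h → Fin 3) :
    ∑ v : Fin 3 → F, mu f v = 0 := by
  classical
  have hexpand : ∑ v : Fin 3 → F, mu f v = ∏ s : Fin 3, ∑ x : F, x ^ ee f s := by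
    rw [show (∑ v : Fin 3 → F, mu f v) = ∑ v : Fin 3 → F, ∏ s : Fin 3, v s ^ ee f s from
      Finset.sum_congr rfl fun v _ => mu_eq_prod_pow f v]
    rw [Finset.prod_univ_sum fun _ : Fin 3 => (Finset.univ : Finset F), Fintype.piFinset_univ]
  have hcard2 : 2 ≤ Fintype.card F := Fintype.one_lt_card
  obtain ⟨s₀, hs₀⟩ : ∃ s₀, ee f s₀ < Fintype.card F - 1 := by
    by_cases h0 : ee f 0 < Fintype.card F - 1
    · exact ⟨0, h0⟩
    · refine ⟨1, ?_⟩
      have hle := ee_le f 0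
      rw [← hF] at hle
      have he0 : ee f 0 = Fintype.card F - 1 := by omega
      have hsum := sum_ee f
      rw [← hF] at hsum
      rw [Fin.sum_univ_three] at hsum
      have : ee f 1 = 0 := by omega
      omega
  rw [hexpand]
  exact Finset.prod_eq_zero (Finset.mem_univ s₀)
    (FiniteField.sum_pow_lt_card_sub_one F _ hs₀)



variable {F : Type} [Field F] [Fintype F]

def phi (w : Fin 3 → F) : (Fin 3 → F) →ₗ[F] F := ∑ s : Fin 3, w s • LinearMap.proj s

lemma phi_apply (w v : Fin 3 → F) : phi w v = ∑ s : Fin 3, w s * v s := by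
  simp [phi, LinearMap.sum_apply, LinearMap.smul_apply, LinearMap.proj_apply, smul_eq_mul]

lemma phi_single (w : Fin 3 → F) (s : Fin 3) : phi w (Pi.single s 1) = w s := by
  classical
  rw [phi_apply]
  rw [Finset.sum_eq_single s]
  · simp
  · intro b _ hb; simp [Pi.single_apply, Ne.symm hb]
  · simp

lemma phi_ne_zero (w : Fin 3 → F) (hw : w ≠ 0) : phi w ≠ 0 := by
  intro hc
  apply hw
  funext s
  have := congrArg (fun f : (Fin 3 → F) →ₗ[F] F => f (Pi.single s 1)) hc
  simpa [phi_single] using this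

lemma phi_smul (c : F) (w : Fin 3 → F) : phi (c • w) = c • phi w := by
  apply LinearMap.ext; intro v
  rw [LinearMap.smul_apply, phi_apply, phi_apply, smul_eq_mul, Finset.mul_sum]
  exact Finset.sum_congr rfl fun s _ => by rw [Pi.smul_apply, smul_eq_mul, mul_assoc]

lemma exists_rep (p : Submodule F (Fin 3 → F)) (hp : finrank F p = 1) :
    ∃ v : Fin 3 → F, v ≠ 0 ∧ p = span F {v} := by
  obtain ⟨v, hv0, hv⟩ := finrank_eq_one_iff'.mp hp
  refine ⟨v.1, by simpa [Submodule.coe_eq_zero] using hv0, ?_⟩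
  apply le_antisymm
  · intro x hx
    obtain ⟨c, hc⟩ := hv ⟨x, hx⟩
    have hcx : c • v.1 = x := congrArg Subtype.val hc
    rw [← hcx]
    exact Submodule.smul_mem _ _ (Submodule.mem_span_singleton_self _)
  · rw [Submodule.span_le, Set.singleton_subset_iff]; exact v.2

lemma ker_phi_finrank (w : Fin 3 → F) (hw : w ≠ 0) :
    finrank F (LinearMap.ker (phi w)) = 2 := by
  have h1 := LinearMap.finrank_range_add_finrank_ker (phi w)
  rw [Module.finrank_fintype_fun_eq_card, Fintype.card_fin] at h1
  have hle : finrank F (LinearMap.range (phi w)) ≤ 1 := by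
    have := Submodule.finrank_le (LinearMap.range (phi w))
    rwa [finrank_self] at this
  have hne : finrank F (LinearMap.range (phi w)) ≠ 0 := by
    rw [Ne, Submodule.finrank_eq_zero, LinearMap.range_eq_bot]
    exact phi_ne_zero w hw
  omega

lemma exists_w (l : Submodule F (Fin 3 → F)) (hl : finrank F l = 2) :
    ∃ w : Fin 3 → F, w ≠ 0 ∧ l = LinearMap.ker (phi w) := by
  classical
  have hq : finrank F ((Fin 3 → F) ⧸ l) = 1 := by
    have := Submodule.finrank_quotient_add_finrank l
    rw [hl, Module.finrank_fintype_fun_eq_card, Fintype.card_fin] at this; omega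
  obtain ⟨ψ⟩ := FiniteDimensional.nonempty_linearEquiv_of_finrank_eq
      (M := (Fin 3 → F) ⧸ l) (M' := F) (by rw [hq, finrank_self])
  set lam : (Fin 3 → F) →ₗ[F] F := ψ.toLinearMap ∘ₗ l.mkQ with hlam
  have hker : LinearMap.ker lam = l := by
    rw [hlam, LinearMap.ker_comp, LinearEquiv.ker, Submodule.comap_bot, Submodule.ker_mkQ]
  set w : Fin 3 → F := fun s => lam (Pi.single s 1) with hwdef
  have hlamphi : lam = phi w := by
    apply LinearMap.ext; intro v
    rw [LinearMap.pi_apply_eq_sum_univ lam v, phi_apply]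
    refine Finset.sum_congr rfl fun s _ => ?_
    rw [smul_eq_mul, mul_comm]
    congr 1
    show lam _ = lam _
    congr 1
    funext j
    rw [Pi.single_apply]
    by_cases hj : s = j <;> simp [hj, eq_comm]
  refine ⟨w, ?_, by rw [← hlamphi, hker]⟩
  intro hw0
  have hz : lam = 0 := by
    rw [hlamphi, hw0]
    apply LinearMap.ext; intro v
    rw [phi_apply]; simp
  have htop : l = ⊤ := by rw [← hker, hz, LinearMap.ker_zero]
  rw [htop] at hl
  rw [finrank_top, Module.finrank_fintype_fun_eq_card, Fintype.card_fin] at hl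
  omega

lemma prop_phi (w w' : Fin 3 → F) (hw : w ≠ 0) (hw' : w' ≠ 0)
    (hker : LinearMap.ker (phi w) = LinearMap.ker (phi w')) :
    ∃ c : F, c ≠ 0 ∧ w' = c • w := by
  obtain ⟨x, hx⟩ : ∃ x, phi w x ≠ 0 := by
    by_contra hc; push_neg at hc
    exact phi_ne_zero w hw (LinearMap.ext fun v => by rw [hc v]; rfl)
  set u := (phi w x)⁻¹ • x with hu
  have hwu : phi w u = 1 := by rw [hu, _root_.map_smul, smul_eq_mul, inv_mul_cancel₀ hx]
  set c := phi w' u with hc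
  have hall : ∀ v, phi w' v = c * phi w v := by
    intro v
    have hmem : v - (phi w v) • u ∈ LinearMap.ker (phi w) := by
      rw [LinearMap.mem_ker, map_sub, _root_.map_smul, hwu, smul_eq_mul, mul_one, sub_self]
    rw [hker, LinearMap.mem_ker, map_sub, _root_.map_smul, smul_eq_mul, sub_eq_zero] at hmem
    rw [hmem, mul_comm]
  have hweq : w' = c • w := by
    funext s
    have hs := hall (Pi.single s 1)
    rw [phi_single, phi_single] at hs
    rw [hs]; rfl
  exact ⟨c, fun hc0 => hw' (by rw [hweq, hc0, zero_smul]), hweq⟩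

abbrev Pt (F : Type) [Field F] := {W : Submodule F (Fin 3 → F) // finrank F W = 1}

section
open scoped Classical
abbrev Ln (F : Type) [Field F] := {W : Submodule F (Fin 3 → F) // finrank F W = 2}

lemma sum_pts [Fintype (Pt F)] (vp : Pt F → (Fin 3 → F)) (hvp0 : ∀ p, vp p ≠ 0)
    (hvpspan : ∀ p : Pt F, p.1 = span F {vp p})
    {A : Type} [AddCommMonoid A] (g : (Fin 3 → F) → A)
    (hg : ∀ (c : F) v, c ≠ 0 → g (c • v) = g v) :
    ∑ p : Pt F, (Fintype.card F - 1) • g (vp p)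
      = ∑ v ∈ Finset.univ.filter (fun v : Fin 3 → F => v ≠ 0), g v := by
  classical
  have hps0 : (Pi.single 0 1 : Fin 3 → F) ≠ 0 := by
    intro hc; have := congrFun hc 0; simp at this
  have p₀ : Pt F := ⟨span F {Pi.single 0 1}, finrank_span_singleton hps0⟩
  set π : (Fin 3 → F) → Pt F := fun v =>
    if hv : v = 0 then p₀ else ⟨span F {v}, finrank_span_singleton hv⟩ with hπ
  rw [← Finset.sum_fiberwise_of_maps_to (g := π) (t := Finset.univ)
    (fun v _ => Finset.mem_univ _) g]
  refine Finset.sum_congr rfl fun p _ => ?_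
  have hfib : (Finset.univ.filter (fun v : Fin 3 → F => v ≠ 0)).filter (fun v => π v = p)
      = Finset.univ.filter (fun v : Fin 3 → F => v ∈ p.1 ∧ v ≠ 0) := by
    ext v
    simp only [Finset.mem_filter, Finset.mem_univ, true_and]
    constructor
    · rintro ⟨hv0, hπv⟩
      rw [hπ] at hπv
      simp only [dif_neg hv0] at hπv
      have hsp : span F {v} = p.1 := congrArg Subtype.val hπv
      exact ⟨hsp ▸ Submodule.mem_span_singleton_self v, hv0⟩
    · rintro ⟨hvmem, hv0⟩
      refine ⟨hv0, ?_⟩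
      rw [hπ]
      simp only [dif_neg hv0]
      apply Subtype.ext
      show span F {v} = p.1
      apply Submodule.eq_of_le_of_finrank_le
      · rw [Submodule.span_le, Set.singleton_subset_iff]; exact hvmem
      · rw [p.2, finrank_span_singleton hv0]
  rw [hfib]
  have hconst : ∀ v ∈ Finset.univ.filter (fun v : Fin 3 → F => v ∈ p.1 ∧ v ≠ 0),
      g v = g (vp p) := by
    intro v hv
    obtain ⟨hvmem, hv0⟩ := (Finset.mem_filter.mp hv).2
    rw [hvpspan p, Submodule.mem_span_singleton] at hvmem
    obtain ⟨c, hc⟩ := hvmem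
    have hc0 : c ≠ 0 := by rintro rfl; rw [zero_smul] at hc; exact hv0 hc.symm
    rw [← hc, hg c _ hc0]
  rw [Finset.sum_congr rfl hconst, Finset.sum_const]
  congr 1
  -- card of the fiber is q - 1
  rw [← Fintype.card_subtype]
  have e1 : {v : Fin 3 → F // v ∈ p.1 ∧ v ≠ 0} ≃ {x : ↥p.1 // ¬ x = 0} :=
    { toFun := fun v => ⟨⟨v.1, v.2.1⟩, fun hc => v.2.2 (by
        simpa [Submodule.mk_eq_zero] using hc)⟩
      invFun := fun x => ⟨x.1.1, x.1.2, fun hc => x.2 (Subtype.ext hc)⟩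
      left_inv := fun v => rfl
      right_inv := fun x => rfl }
  rw [Fintype.card_congr e1, Fintype.card_subtype_compl, Fintype.card_subtype_eq]
  have : Fintype.card ↥p.1 = Fintype.card F := by
    rw [card_eq_pow_finrank (K := F) (V := ↥p.1), p.2, pow_one]
  rw [this]

lemma card_pt [Fintype (Pt F)] (vp : Pt F → (Fin 3 → F)) (hvp0 : ∀ p, vp p ≠ 0)
    (hvpspan : ∀ p : Pt F, p.1 = span F {vp p}) :
    Fintype.card (Pt F) * (Fintype.card F - 1) = Fintype.card F ^ 3 - 1 := by
  classical
  have := sum_pts vp hvp0 hvpspan (A := ℕ) (fun _ => 1) (fun _ _ _ => rfl)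
  rw [Finset.sum_const, Finset.sum_const] at this
  simp only [smul_eq_mul, mul_one, Finset.card_univ] at this
  rw [this]
  have hfe : (Finset.univ.filter (fun v : Fin 3 → F => v ≠ 0))
      = Finset.univ.erase 0 := Finset.filter_ne' _ _
  rw [hfe, Finset.card_erase_of_mem (Finset.mem_univ _), Finset.card_univ]
  congr 1
  rw [card_eq_pow_finrank (K := F) (V := Fin 3 → F),
    Module.finrank_fintype_fun_eq_card, Fintype.card_fin]

lemma card_pt_eq [Fintype (Pt F)] (vp : Pt F → (Fin 3 → F)) (hvp0 : ∀ p, vp p ≠ 0)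
    (hvpspan : ∀ p : Pt F, p.1 = span F {vp p}) :
    Fintype.card (Pt F) = Fintype.card F ^ 2 + Fintype.card F + 1 := by
  have hq2 : 2 ≤ Fintype.card F := Fintype.one_lt_card
  have hN := card_pt vp hvp0 hvpspan
  have idq : ∀ q : ℕ, 2 ≤ q → (q ^ 2 + q + 1) * (q - 1) + 1 = q ^ 3 := by
    intro q hq
    obtain ⟨k, rfl⟩ := Nat.exists_eq_add_of_le hq
    have h1 : 2 + k - 1 = k + 1 := by omega
    rw [h1]; ring
  have idq' := idq _ hq2
  have hq3 : 1 ≤ Fintype.card F ^ 3 := Nat.one_le_pow _ _ (by omega)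
  have h2 : Fintype.card (Pt F) * (Fintype.card F - 1) + 1 = Fintype.card F ^ 3 := by
    rw [hN, Nat.sub_add_cancel hq3]
  have h3 : Fintype.card (Pt F) * (Fintype.card F - 1)
      = (Fintype.card F ^ 2 + Fintype.card F + 1) * (Fintype.card F - 1) :=
    Nat.add_right_cancel (h2.trans idq'.symm)
  exact Nat.eq_of_mul_eq_mul_right (by omega) h3

end



lemma char_two {h : ℕ} {F : Type} [Field F] [Fintype F] (hF : Fintype.card F = 2 ^ h) :
    CharP F 2 := by
  haveI := ringChar.charP F
  obtain ⟨n, hp, hc⟩ := FiniteField.card F (ringChar F)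
  have hdvd : ringChar F ∣ 2 ^ h := by
    rw [← hF, hc]
    exact dvd_pow_self _ n.pos.ne'
  have h2 := (Nat.prime_dvd_prime_iff_eq hp Nat.prime_two).mp (hp.dvd_of_dvd_pow hdvd)
  rw [← h2]
  exact ringChar.charP F

lemma key {h : ℕ} {F : Type} [Field F] [Fintype F]
    [Fintype (Pt F)] [Fintype (Ln F)]
    (hh : 1 ≤ h) (hF : Fintype.card F = 2 ^ h)
    (M : Matrix (Pt F) (Ln F) (ZMod 2))
    (hM1 : ∀ (p : Pt F) (l : Ln F), p.1 ≤ l.1 → M p l = 1)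
    (hM0 : ∀ (p : Pt F) (l : Ln F), ¬ p.1 ≤ l.1 → M p l = 0) :
    Module.finrank (ZMod 2) (LinearMap.ker M.mulVecLin) = 2 ^ (2 * h) - 3 ^ h + 2 ^ h ∧
    M.rank = 3 ^ h + 1 := by
  classical
  haveI hchar : CharP F 2 := char_two hF
  haveI : Fact (Nat.Prime 2) := ⟨Nat.prime_two⟩
  have hq2 : 2 ≤ Fintype.card F := Fintype.one_lt_card
  choose vp hvp0 hvpspan using fun p : Pt F => exists_rep p.1 p.2
  choose wl hwl0 hwlker using fun l : Ln F => exists_w l.1 l.2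
  have hpow1 : ∀ c : F, c ≠ 0 → c ^ (2 ^ h - 1) = 1 := by
    intro c hc
    rw [← hF]
    exact FiniteField.pow_card_sub_one_eq_one c hc
  have hmu_inv : ∀ (f : Fin h → Fin 3) (c : F) (v : Fin 3 → F), c ≠ 0 →
      mu f (c • v) = mu f v := by
    intro f c v hc
    rw [mu_smul, hpow1 c hc, one_mul]
  -- expansion of the (q-1)-st power of the dot product
  have hexp : ∀ w v : Fin 3 → F, (phi w v) ^ (2 ^ h - 1)
      = ∑ f : Fin h → Fin 3, mu f w * mu f v := by
    intro w v
    have h1 : (phi w v) ^ (2 ^ h - 1) = ∏ t : Fin h, (phi w v) ^ 2 ^ (t : ℕ) := by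
      rw [Finset.prod_pow_eq_pow_sum, Fin.sum_univ_eq_sum_range, sum_range_two_pow]
    have h2 : ∀ t : Fin h, (phi w v) ^ 2 ^ (t : ℕ)
        = ∑ s : Fin 3, (w s * v s) ^ 2 ^ (t : ℕ) := by
      intro t
      rw [phi_apply]
      have h3 := map_sum (iterateFrobenius F 2 (t : ℕ)) (fun s => w s * v s) Finset.univ
      simp only [iterateFrobenius_def] at h3
      exact h3
    rw [h1, Finset.prod_congr rfl (fun t _ => h2 t), Finset.prod_univ_sum,
      Fintype.piFinset_univ]
    refine Finset.sum_congr rfl fun f _ => ?_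
    rw [mu, mu, ← Finset.prod_mul_distrib]
    exact Finset.prod_congr rfl fun t _ => mul_pow _ _ _
  -- incidence in terms of phi
  have hinc : ∀ (p : Pt F) (l : Ln F), (p.1 ≤ l.1 ↔ phi (wl l) (vp p) = 0) := by
    intro p l
    rw [hvpspan p, hwlker l, Submodule.span_le, Set.singleton_subset_iff]
    exact ⟨fun hs => LinearMap.mem_ker.mp hs, fun hz => LinearMap.mem_ker.mpr hz⟩
  -- the columns over F
  set ι : ZMod 2 →+* F := ZMod.castHom (dvd_refl 2) F with hι
  set Mf : Matrix (Pt F) (Ln F) F := M.map ⇑ι with hMf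
  have hcolpt : ∀ (l : Ln F) (p : Pt F),
      Mfᵀ l p = 1 + ∑ f : Fin h → Fin 3, mu f (wl l) * mu f (vp p) := by
    intro l p
    rw [← hexp]
    have hentry : Mfᵀ l p = ι (M p l) := rfl
    rw [hentry]
    by_cases hc : p.1 ≤ l.1
    · rw [hM1 p l hc, _root_.map_one, (hinc p l).mp hc, zero_pow (by
        have : 1 ≤ 2 ^ h := Nat.one_le_two_pow
        have : 2 ≤ 2 ^ h := by
          calc 2 = 2 ^ 1 := (pow_one 2).symm
          _ ≤ 2 ^ h := Nat.pow_le_pow_right (by norm_num) hh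
        omega : 2 ^ h - 1 ≠ 0), add_zero]
    · rw [hM0 p l hc, _root_.map_zero]
      have hne : phi (wl l) (vp p) ≠ 0 := fun hz => hc ((hinc p l).mpr hz)
      rw [hpow1 _ hne, CharTwo.add_self_eq_zero]
  have hmu_rep : ∀ (f : Fin h → Fin 3) (v : Fin 3 → F) (p : Pt F),
      v ≠ 0 → v ∈ p.1 → mu f v = mu f (vp p) := by
    intro f v p hv0 hvmem
    rw [hvpspan p, Submodule.mem_span_singleton] at hvmem
    obtain ⟨c, hc⟩ := hvmem
    have hc0 : c ≠ 0 := by rintro rfl; rw [zero_smul] at hc; exact hv0 hc.symm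
    rw [← hc, hmu_inv f c _ hc0]
  -- bijection between points and lines
  have hkb : ∀ p : Pt F, finrank F (LinearMap.ker (phi (vp p))) = 2 :=
    fun p => ker_phi_finrank _ (hvp0 p)
  set toLn : Pt F → Ln F := fun p => ⟨LinearMap.ker (phi (vp p)), hkb p⟩ with htoLn
  have htoLn_bij : Function.Bijective toLn := by
    constructor
    · intro p p' hpp'
      have hker : LinearMap.ker (phi (vp p)) = LinearMap.ker (phi (vp p')) :=
        congrArg Subtype.val hpp'
      obtain ⟨c, hc0, hc⟩ := prop_phi _ _ (hvp0 p) (hvp0 p') hker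
      apply Subtype.ext
      rw [hvpspan p, hvpspan p', hc, Submodule.span_singleton_smul_eq (IsUnit.mk0 c hc0) _]
    · intro l
      set p : Pt F := ⟨span F {wl l}, finrank_span_singleton (hwl0 l)⟩ with hp
      refine ⟨p, Subtype.ext ?_⟩
      show LinearMap.ker (phi (vp p)) = l.1
      have hvpp : vp p ∈ span F {wl l} := by
        have h6 := hvpspan p
        have : vp p ∈ p.1 := h6 ▸ Submodule.mem_span_singleton_self _
        exact this
      obtain ⟨c, hc⟩ := Submodule.mem_span_singleton.mp hvpp
      have hc0 : c ≠ 0 := by rintro rfl; rw [zero_smul] at hc; exact hvp0 p hc.symm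
      rw [← hc, phi_smul, LinearMap.ker_smul _ c hc0]
      exact (hwlker l).symm
  -- proportionality of wl (toLn p) and vp p
  have hmu_wl_toLn : ∀ (f : Fin h → Fin 3) (p : Pt F),
      mu f (wl (toLn p)) = mu f (vp p) := by
    intro f p
    have hker : LinearMap.ker (phi (vp p)) = LinearMap.ker (phi (wl (toLn p))) := by
      have h5 := hwlker (toLn p)
      rw [← h5]
    obtain ⟨c, hc0, hc⟩ := prop_phi _ _ (hvp0 p) (hwl0 (toLn p)) hker
    rw [hc, hmu_inv f c _ hc0]
  -- cast of q - 1 is 1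
  have hcast : ((Fintype.card F - 1 : ℕ) : F) = 1 := by
    rw [Nat.cast_sub (by omega), FiniteField.cast_card_eq_zero, Nat.cast_one, zero_sub,
      CharTwo.neg_eq]
  -- sum over lines of mu f (wl l) vanishes
  have hsum_wl : ∀ f : Fin h → Fin 3, ∑ l : Ln F, mu f (wl l) = 0 := by
    intro f
    have h1 : ∑ l : Ln F, mu f (wl l) = ∑ p : Pt F, mu f (wl (toLn p)) :=
      (Function.Bijective.sum_comp htoLn_bij _).symm
    rw [h1, Finset.sum_congr rfl (fun p _ => hmu_wl_toLn f p)]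
    have h3 := sum_pts vp hvp0 hvpspan (mu f) (hmu_inv f)
    have h4 : ∑ p : Pt F, mu f (vp p)
        = ∑ v ∈ Finset.univ.filter (fun v : Fin 3 → F => v ≠ 0), mu f v := by
      rw [← h3]
      refine Finset.sum_congr rfl fun p _ => ?_
      rw [nsmul_eq_mul, hcast, one_mul]
    rw [h4]
    have h5 : ∑ v ∈ Finset.univ.filter (fun v : Fin 3 → F => v ≠ 0), mu f v
        = (∑ v : Fin 3 → F, mu f v) - mu f 0 := by
      rw [Finset.filter_ne' Finset.univ (0 : Fin 3 → F),
        ← Finset.add_sum_erase Finset.univ (mu f) (Finset.mem_univ 0)]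
      ring
    rw [h5, sum_mu_eq_zero hh hF f, mu_zero hh f, sub_zero]
  -- the Psi family
  set Φ : (Fin h → Fin 3) → (Pt F → F) := fun f p => mu f (vp p) with hΦ
  set Ψ : Option (Fin h → Fin 3) → (Pt F → F) :=
    fun o => Option.elim o (fun _ => 1) Φ with hΨ
  have hmono := mono_li (F := F) (ee (h := h)) ee_inj
    (fun f s => by rw [hF]; exact ee_le f s)
  have hmu_zero_coeff : ∀ c : (Fin h → Fin 3) → F,
      (∀ v : Fin 3 → F, ∑ f, c f * mu f v = 0) → ∀ f, c f = 0 := by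
    intro c hc
    apply Fintype.linearIndependent_iff.mp hmono c
    funext v
    simp only [Finset.sum_apply, Pi.smul_apply, smul_eq_mul, Pi.zero_apply]
    rw [← hc v]
    exact Finset.sum_congr rfl fun f _ => by rw [← mu_eq_prod_pow]
  have hpv : ∀ v : Fin 3 → F, v ≠ 0 → ∃ p : Pt F, ∀ f : Fin h → Fin 3, mu f (vp p) = mu f v := by
    intro v hv
    refine ⟨⟨span F {v}, finrank_span_singleton hv⟩, fun f => ?_⟩
    exact (hmu_rep f v ⟨span F {v}, finrank_span_singleton hv⟩ hv
      (Submodule.mem_span_singleton_self v)).symm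
  -- linear independence of Ψ
  have hΨli : LinearIndependent F Ψ := by
    rw [Fintype.linearIndependent_iff]
    intro g hg
    have hpt : ∀ p : Pt F, g none + ∑ f, g (some f) * mu f (vp p) = 0 := by
      intro p
      have h0 := congrFun hg p
      simp only [Finset.sum_apply, Pi.smul_apply, smul_eq_mul, Pi.zero_apply] at h0
      rw [Fintype.sum_option] at h0
      simpa [hΨ, hΦ] using h0
    have hvv : ∀ v : Fin 3 → F, v ≠ 0 → g none + ∑ f, g (some f) * mu f v = 0 := by
      intro v hv
      obtain ⟨p, hp⟩ := hpv v hv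
      have h0 := hpt p
      rw [Finset.sum_congr rfl (fun f _ => by rw [hp f])] at h0
      exact h0
    have hgnone : g none = 0 := by
      have hTot : ∑ v : Fin 3 → F, (g none + ∑ f, g (some f) * mu f v) = g none := by
        rw [← Finset.add_sum_erase Finset.univ _ (Finset.mem_univ (0 : Fin 3 → F)),
          Finset.sum_eq_zero (fun v hv => hvv v (Finset.mem_erase.mp hv).1), add_zero,
          Finset.sum_congr rfl (fun f _ => by rw [mu_zero hh f, mul_zero]),
          Finset.sum_const_zero, add_zero]
      have hTot2 : ∑ v : Fin 3 → F, (g none + ∑ f, g (some f) * mu f v) = 0 := by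
        rw [Finset.sum_add_distrib, Finset.sum_const, Finset.card_univ]
        have hcV : ((Fintype.card (Fin 3 → F)) : F) = 0 := by
          rw [Fintype.card_fun, Fintype.card_fin, Nat.cast_pow,
            FiniteField.cast_card_eq_zero, zero_pow (by norm_num : (3 : ℕ) ≠ 0)]
        rw [nsmul_eq_mul, hcV, zero_mul, zero_add, Finset.sum_comm, Finset.sum_eq_zero]
        intro f _
        rw [← Finset.mul_sum, sum_mu_eq_zero hh hF f, mul_zero]
      rw [hTot] at hTot2
      exact hTot2
    intro o
    match o with
    | none => exact hgnone
    | some f =>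
      refine hmu_zero_coeff (fun f => g (some f)) ?_ f
      intro v
      by_cases hv : v = 0
      · subst hv
        exact Finset.sum_eq_zero fun f _ => by rw [mu_zero hh, mul_zero]
      · have h0 := hvv v hv
        rw [hgnone, zero_add] at h0
        exact h0
  -- PAR: the all-one function is the sum of the columns
  have hone : (fun _ : Pt F => (1 : F)) = ∑ l : Ln F, Mfᵀ l := by
    funext p
    rw [show (∑ l : Ln F, Mfᵀ l) p = ∑ l, Mfᵀ l p from Finset.sum_apply _ _ _,
      Finset.sum_congr rfl (fun l _ => hcolpt l p),
      Finset.sum_add_distrib, Finset.sum_const, Finset.card_univ]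
    have hcastL : ((Fintype.card (Ln F)) : F) = 1 := by
      have hcard : Fintype.card (Pt F) = Fintype.card (Ln F) :=
        Fintype.card_of_bijective htoLn_bij
      rw [← hcard, card_pt_eq vp hvp0 hvpspan, Nat.cast_add, Nat.cast_add, Nat.cast_pow,
        Nat.cast_one, FiniteField.cast_card_eq_zero]
      norm_num
    rw [nsmul_eq_mul, hcastL, mul_one, Finset.sum_comm, Finset.sum_eq_zero, add_zero]
    intro f _
    rw [← Finset.sum_mul, hsum_wl f, zero_mul]
  set CS := span F (Set.range Mfᵀ) with hCS
  have hone_mem : (fun _ : Pt F => (1 : F)) ∈ CS := by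
    rw [hone]
    exact Submodule.sum_mem _ (fun l _ => Submodule.subset_span ⟨l, rfl⟩)
  -- the coefficient vectors span everything
  set vec : Ln F → ((Fin h → Fin 3) → F) := fun l f => mu f (wl l) with hvec
  have hvec_top : span F (Set.range vec) = ⊤ := by
    by_contra hne
    obtain ⟨x, hx⟩ : ∃ x, x ∉ span F (Set.range vec) := by
      by_contra hc
      push_neg at hc
      exact hne (Submodule.eq_top_iff'.mpr hc)
    obtain ⟨ξ, hξx, hξmap⟩ := Submodule.exists_dual_map_eq_bot_of_notMem hx inferInstance
    set cf : (Fin h → Fin 3) → F := fun f => ξ (fun f' => if f = f' then 1 else 0) with hcf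
    have hξapp : ∀ y, ξ y = ∑ f, y f * cf f := by
      intro y
      rw [LinearMap.pi_apply_eq_sum_univ ξ y]
      exact Finset.sum_congr rfl fun f _ => by rw [smul_eq_mul]
    have hvl : ∀ l : Ln F, ∑ f, mu f (wl l) * cf f = 0 := by
      intro l
      have hmem : ξ (vec l) ∈ Submodule.map ξ (span F (Set.range vec)) :=
        Submodule.mem_map_of_mem (Submodule.subset_span ⟨l, rfl⟩)
      rw [hξmap] at hmem
      have h0 : ξ (vec l) = 0 := hmem
      rw [hξapp (vec l)] at h0
      exact h0
    have hallv : ∀ v : Fin 3 → F, ∑ f, cf f * mu f v = 0 := by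
      intro v
      by_cases hv : v = 0
      · subst hv
        exact Finset.sum_eq_zero fun f _ => by rw [mu_zero hh, mul_zero]
      · set p : Pt F := ⟨span F {v}, finrank_span_singleton hv⟩ with hpdef
        have hmu1 : ∀ f : Fin h → Fin 3, mu f (vp p) = mu f v := fun f =>
          (hmu_rep f v p hv (Submodule.mem_span_singleton_self v)).symm
        have hmu2 : ∀ f : Fin h → Fin 3, mu f (wl (toLn p)) = mu f v := by
          intro f
          rw [hmu_wl_toLn f p, hmu1 f]
        have h0 := hvl (toLn p)
        rw [Finset.sum_congr rfl (fun f _ => by rw [hmu2 f, mul_comm])] at h0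
        exact h0
    have hcf0 : ∀ f, cf f = 0 := hmu_zero_coeff cf hallv
    apply hξx
    rw [hξapp x, Finset.sum_eq_zero (fun f _ => by rw [hcf0 f, mul_zero])]
  -- each Φ f belongs to the column span
  have hΦmem : ∀ f, Φ f ∈ CS := by
    intro f
    have hsingle : (fun f' => if f = f' then (1:F) else 0) ∈ span F (Set.range vec) := by
      rw [hvec_top]
      exact Submodule.mem_top
    obtain ⟨c, hc⟩ := (mem_span_range_iff_exists_fun F).mp hsingle
    have hcpt : ∀ f' : Fin h → Fin 3, ∑ l, c l * mu f' (wl l) = if f = f' then (1:F) else 0 := by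
      intro f'
      have h0 := congrFun hc f'
      simpa [Finset.sum_apply, Pi.smul_apply, smul_eq_mul, hvec] using h0
    have hfin : ∀ p : Pt F, ∑ f' : Fin h → Fin 3, (∑ l, c l * mu f' (wl l)) * mu f' (vp p)
        = mu f (vp p) := by
      intro p
      calc ∑ f' : Fin h → Fin 3, (∑ l, c l * mu f' (wl l)) * mu f' (vp p)
          = ∑ f' : Fin h → Fin 3, (if f = f' then (1 : F) else 0) * mu f' (vp p) :=
            Finset.sum_congr rfl fun f' _ => by rw [hcpt f']
        _ = mu f (vp p) := by
            simp only [ite_mul, one_mul, zero_mul]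
            rw [Finset.sum_ite_eq Finset.univ f (fun f' => mu f' (vp p)),
              if_pos (Finset.mem_univ f)]
    have hkey : Φ f = (∑ l, c l • Mfᵀ l) - (∑ l, c l) • (fun _ : Pt F => (1:F)) := by
      funext p
      simp only [hΦ, Finset.sum_apply, Pi.smul_apply, Pi.sub_apply, smul_eq_mul]
      rw [Finset.sum_congr rfl (fun l _ => by rw [hcolpt l p])]
      have hlhs : ∑ l, c l * (1 + ∑ f' : Fin h → Fin 3, mu f' (wl l) * mu f' (vp p))
          = (∑ l, c l) + ∑ f' : Fin h → Fin 3, (∑ l, c l * mu f' (wl l)) * mu f' (vp p) := by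
        simp only [mul_add, mul_one, Finset.mul_sum, Finset.sum_add_distrib]
        congr 1
        rw [Finset.sum_comm]
        refine Finset.sum_congr rfl fun f' _ => ?_
        rw [Finset.sum_mul]
        refine Finset.sum_congr rfl fun l _ => ?_
        ring
      rw [hlhs, hfin p]
      ring
    rw [hkey]
    exact Submodule.sub_mem _
      (Submodule.sum_mem _ fun l _ => Submodule.smul_mem _ _ (Submodule.subset_span ⟨l, rfl⟩))
      (Submodule.smul_mem _ _ hone_mem)
  -- span of columns = span of Ψ
  have hspan_eq : CS = span F (Set.range Ψ) := by
    apply le_antisymm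
    · rw [hCS, span_le]
      rintro - ⟨l, rfl⟩
      have hcol : Mfᵀ l = Ψ none + ∑ f, mu f (wl l) • Ψ (some f) := by
        funext p
        rw [Pi.add_apply, Finset.sum_apply, hcolpt l p]
        simp [hΨ, hΦ, smul_eq_mul]
      rw [hcol]
      exact add_mem (Submodule.subset_span ⟨none, rfl⟩)
        (Submodule.sum_mem _ fun f _ =>
          Submodule.smul_mem _ _ (Submodule.subset_span ⟨some f, rfl⟩))
    · rw [span_le]
      rintro - ⟨o, rfl⟩
      match o with
      | none => exact hone_mem
      | some f => exact hΦmem f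
  have hrankf : Mf.rank = 3 ^ h + 1 := by
    rw [rank_eq_finrank_span_cols', ← hCS, hspan_eq, finrank_span_eq_card hΨli,
      Fintype.card_option, Fintype.card_fun, Fintype.card_fin, Fintype.card_fin]
  have hrank : M.rank = 3 ^ h + 1 := by
    rw [← rank_map_field ι M]
    exact hrankf
  refine ⟨?_, hrank⟩
  have hrn := LinearMap.finrank_range_add_finrank_ker (Matrix.mulVecLin M)
  rw [Module.finrank_fintype_fun_eq_card] at hrn
  have hcardL : Fintype.card (Ln F) = 2 ^ (2 * h) + 2 ^ h + 1 := by
    rw [← Fintype.card_of_bijective htoLn_bij, card_pt_eq vp hvp0 hvpspan, hF, ← pow_mul,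
      Nat.mul_comm h 2]
  have hrange : finrank (ZMod 2) (LinearMap.range M.mulVecLin) = 3 ^ h + 1 := hrank
  have h34 : 3 ^ h ≤ 2 ^ (2 * h) := by
    calc 3 ^ h ≤ 4 ^ h := Nat.pow_le_pow_left (by norm_num) h
    _ = 2 ^ (2 * h) := by rw [show (4 : ℕ) = 2 ^ 2 by norm_num, ← pow_mul]
  rw [hcardL, hrange] at hrn
  generalize hA : (2 : ℕ) ^ (2 * h) = A at h34 hrn ⊢
  generalize hB : (3 : ℕ) ^ h = B at h34 hrn ⊢
  generalize hC : (2 : ℕ) ^ h = C at hrn ⊢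
  omega

end PG2


/-- For `q = 2^h` (`h ≥ 1`) and `F` the field with `q` elements, the `F₂`-space
of vectors indexed by the lines of `PG(2,q)` (the 2-dimensional subspaces of `F³`) whose
incidence sums at every point (1-dimensional subspace) vanish has dimension
`2^(2h) - 3^h + 2^h`; equivalently, the `F₂`-rank of the point-line incidence matrix of
`PG(2, 2^h)` equals `3^h + 1`. -/
theorem statement_2 (h : ℕ) (hh : 1 ≤ h) (F : Type) [Field F] [Fintype F]
    (hF : Fintype.card F = 2 ^ h) :
    letI : ∀ a b : Submodule F (Fin 3 → F), Decidable (a ≤ b) :=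
      fun _ _ => Classical.propDecidable _
    letI : Fintype (Submodule F (Fin 3 → F)) := Fintype.ofFinite _
    let M : Matrix {W : Submodule F (Fin 3 → F) // Module.finrank F W = 1}
        {W : Submodule F (Fin 3 → F) // Module.finrank F W = 2} (ZMod 2) :=
      Matrix.of fun p ℓ => if p.1 ≤ ℓ.1 then 1 else 0
    Module.finrank (ZMod 2) ↥(LinearMap.ker M.mulVecLin) = 2 ^ (2 * h) - 3 ^ h + 2 ^ h ∧
    M.rank = 3 ^ h + 1 := by
  intro M
  exact @PG2.key h F _ _
    (@Subtype.fintype _ _ (fun a => instDecidableEqNat (Module.finrank F a) 1)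
      (Fintype.ofFinite (Submodule F (Fin 3 → F))))
    (@Subtype.fintype _ _ (fun a => instDecidableEqNat (Module.finrank F a) 2)
      (Fintype.ofFinite (Submodule F (Fin 3 → F))))
    hh hF M (fun p l hle => by simp only [M, Matrix.of_apply, if_pos hle])
    (fun p l hle => by simp only [M, Matrix.of_apply, if_neg hle])
end

section
/- Let h ≥ 1, q = 2^h, and let F be the finite field with q elements. Let P be the set of 1-dimensional subspaces and L the set of 2-dimensional subspaces of F³, with incidence given by inclusion. Consider the set of nonzero vectors x : L → F₂ satisfying, for every point p ∈ P, Σ_{ℓ ∈ L, p ⊆ ℓ} x(ℓ) = 0 in F₂. Every such nonzero vector has Hamming weight at least 2^h + 2, and there exists one of Hamming weight exactly 2^h + 2. -/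
open Finset Module Submodule

section Geom
variable {F V : Type} [Field F] [AddCommGroup V] [Module F V] [FiniteDimensional F V]

lemma exists_gen (p : Submodule F V) (hp : finrank F p = 1) :
    ∃ w : V, w ≠ 0 ∧ p = Submodule.span F {w} := by
  let b := Module.finBasisOfFinrankEq F p hp
  refine ⟨(b 0 : V), ?_, ?_⟩
  · simpa [Submodule.coe_eq_zero] using b.ne_zero 0
  · refine (Submodule.eq_of_le_of_finrank_le
      ((Submodule.span_singleton_le_iff_mem _ _).2 (b 0).2) ?_).symm
    rw [hp, finrank_span_singleton]
    simpa [Submodule.coe_eq_zero] using b.ne_zero 0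

lemma sup_rank_two {p q : Submodule F V} (hp : finrank F p = 1) (hq : finrank F q = 1)
    (hne : p ≠ q) : finrank F ↥(p ⊔ q) = 2 := by
  have hkey := Submodule.finrank_sup_add_finrank_inf_eq p q
  have hinf : finrank F ↥(p ⊓ q) = 0 := by
    by_contra hne0
    have hle : finrank F ↥(p ⊓ q) ≤ finrank F p := Submodule.finrank_mono inf_le_left
    have e1 : p ⊓ q = p := Submodule.eq_of_le_of_finrank_le (inf_le_left : p ⊓ q ≤ p) (by omega)
    have e2 : p ⊓ q = q := Submodule.eq_of_le_of_finrank_le (inf_le_right : p ⊓ q ≤ q) (by omega)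
    exact hne (e1 ▸ e2)
  omega

lemma lines_eq_of_two {p q m ℓ : Submodule F V} (hp : finrank F p = 1) (hq : finrank F q = 1)
    (hne : p ≠ q) (hpm : p ≤ m) (hqm : q ≤ m) (hpl : p ≤ ℓ) (hql : q ≤ ℓ)
    (hm : finrank F m = 2) (hl : finrank F ℓ = 2) : m = ℓ := by
  have hs := sup_rank_two hp hq hne
  have h1 : p ⊔ q = m := Submodule.eq_of_le_of_finrank_le (sup_le hpm hqm) (by omega)
  have h2 : p ⊔ q = ℓ := Submodule.eq_of_le_of_finrank_le (sup_le hpl hql) (by omega)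
  rw [← h1, h2]

lemma points_on_line (W : Submodule F V) (hW : finrank F W = 2) :
    ∃ g : Option F → Submodule F V, Function.Injective g ∧
      ∀ i, finrank F (g i) = 1 ∧ g i ≤ W := by
  classical
  let b := Module.finBasisOfFinrankEq F W hW
  have hli := b.linearIndependent
  have hcomb : ∀ c d : F, c • b 0 + d • b 1 = 0 → c = 0 ∧ d = 0 := by
    intro c d hcd
    have := Fintype.linearIndependent_iff.1 hli ![c, d] (by
      simpa [Fin.sum_univ_two] using hcd)
    exact ⟨this 0, this 1⟩
  let u : Option F → W := fun i => match i with
    | none => b 1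
    | some t => b 0 + t • b 1
  have hu0 : ∀ i, u i ≠ 0 := by
    rintro (_|t) h
    · exact one_ne_zero ((hcomb 0 1 (by simpa using h)).2)
    · exact one_ne_zero (hcomb 1 t (by simpa using h)).1
  refine ⟨fun i => Submodule.span F {(u i : V)}, ?_, ?_⟩
  · intro i j hij
    simp only at hij
    have hmem : (u i : V) ∈ Submodule.span F {(u j : V)} := by
      rw [← hij]; exact Submodule.mem_span_singleton_self _
    obtain ⟨c, hc⟩ := Submodule.mem_span_singleton.1 hmem
    have hc' : c • u j = u i := by
      apply Subtype.coe_injective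
      simpa using hc
    match i, j with
    | none, none => rfl
    | none, some t =>
        exfalso
        simp only [u, smul_add, smul_smul] at hc'
        have h0 : c • b 0 + (c * t - 1) • b 1 = 0 := by
          linear_combination (norm := module) hc'
        obtain ⟨e1, e2⟩ := hcomb _ _ h0
        rw [e1, zero_mul] at e2
        simp at e2
    | some t, none =>
        exfalso
        simp only [u] at hc'
        have h0 : (1 : F) • b 0 + (t - c) • b 1 = 0 := by
          linear_combination (norm := module) -hc'
        exact one_ne_zero (hcomb _ _ h0).1
    | some t, some s =>
        simp only [u, smul_add, smul_smul] at hc'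
        have h0 : (c - 1) • b 0 + (c * s - t) • b 1 = 0 := by
          linear_combination (norm := module) hc'
        obtain ⟨e1, e2⟩ := hcomb _ _ h0
        have hc1 : c = 1 := by
          have := sub_eq_zero.1 e1; simpa using this
        rw [hc1, one_mul] at e2
        have : s = t := sub_eq_zero.1 e2
        rw [this]
  · intro i
    refine ⟨finrank_span_singleton (by simpa [Submodule.coe_eq_zero] using hu0 i), ?_⟩
    exact (Submodule.span_singleton_le_iff_mem _ _).2 (u i).2

end Geom

section Count
variable {F : Type} [Field F] [Fintype F] [CharP F 2] [DecidableEq F]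

omit [Fintype F] [DecidableEq F] in
lemma sq_inj : Function.Injective (fun t : F => t * t) := by
  intro t s h
  simp only at h
  have h2 : (t + s) * (t + s) = 0 := by
    rw [CharTwo.add_mul_self, h, CharTwo.add_self_eq_zero]
  have h3 := mul_self_eq_zero.1 h2
  rw [eq_neg_of_add_eq_zero_left h3, CharTwo.neg_eq]

lemma quad_count (a b c : F) (hw : ¬(a = 0 ∧ b = 0 ∧ c = 0)) :
    ((if b = 0 then (1 : ZMod 2) else 0) + (if c = 0 then (1 : ZMod 2) else 0)
      + ((univ.filter fun t : F => a + t * b + t ^ 2 * c = 0).card : ZMod 2)) = 0 := by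
  have htwo : (2 : F) = 0 := CharTwo.two_eq_zero
  by_cases hb : b = 0 <;> by_cases hc : c = 0
  · have ha : a ≠ 0 := fun h => hw ⟨h, hb, hc⟩
    have hset : (univ.filter fun t : F => a + t * b + t ^ 2 * c = 0) = ∅ := by
      ext t; simp [hb, hc, ha]
    rw [hset]
    simp [hb, hc]
    decide
  · obtain ⟨r, hr⟩ := (Finite.injective_iff_surjective.1 (sq_inj (F := F))) (a / c)
    simp only at hr
    have hset : (univ.filter fun t : F => a + t * b + t ^ 2 * c = 0) = {r} := by
      ext t
      simp only [mem_filter, mem_univ, true_and, mem_singleton, hb, mul_zero, add_zero]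
      constructor
      · intro h
        apply sq_inj
        show t * t = r * r
        rw [hr, eq_div_iff hc]
        linear_combination h + (-a) * htwo
      · intro h
        rw [h]
        have hr2 : r * r * c = a := by rw [hr]; field_simp
        linear_combination hr2 + a * htwo
    rw [hset]
    simp [hb, hc]
    decide
  · have hset : (univ.filter fun t : F => a + t * b + t ^ 2 * c = 0) = {a / b} := by
      ext t
      simp only [mem_filter, mem_univ, true_and, mem_singleton, hc, mul_zero, add_zero]
      constructor
      · intro h
        rw [eq_div_iff hb]
        linear_combination h + (-a) * htwo
      · rintro rfl
        rw [div_mul_cancel₀ a hb]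
        exact CharTwo.add_self_eq_zero a
    rw [hset]
    simp [hb, hc]
    decide
  · rcases (univ.filter fun t : F => a + t * b + t ^ 2 * c = 0).eq_empty_or_nonempty with
      he | ⟨r, hr⟩
    · rw [he]; simp [hb, hc]
    · have hrr : a + r * b + r ^ 2 * c = 0 := by
        simpa using (mem_filter.1 hr).2
      have hδ : b / c ≠ 0 := div_ne_zero hb hc
      have hset : (univ.filter fun t : F => a + t * b + t ^ 2 * c = 0) = {r, r + b / c} := by
        ext t
        simp only [mem_filter, mem_univ, true_and, mem_insert, mem_singleton]
        constructor
        · intro ht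
          have key : (t + r) * (b + (t + r) * c) = 0 := by
            linear_combination ht - hrr + (r * b + t * r * c + r ^ 2 * c) * htwo
          rcases mul_eq_zero.1 key with h1 | h1
          · left
            rw [eq_neg_of_add_eq_zero_left h1, CharTwo.neg_eq]
          · right
            have hq : t + r = b / c := by
              rw [eq_div_iff hc]
              linear_combination h1 + (-b) * htwo
            linear_combination -hq + (t - b / c) * htwo
        · intro ht
          rcases ht with rfl | rfl
          · exact hrr
          · have hδc : (b / c) * c = b := div_mul_cancel₀ b hc
            linear_combination hrr + (b / c) * hδc + ((b / c) * b + r * (b / c) * c) * htwo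
      rw [hset]
      have hne : r ≠ r + b / c := by
        intro hcon
        exact hδ (by linear_combination -hcon)
      rw [card_insert_of_notMem (by simp [hne]), card_singleton]
      simp [hb, hc]
      decide
end Count

section Funct
variable {F : Type} [Field F]

def phi3 (a : Fin 3 → F) : (Fin 3 → F) →ₗ[F] F :=
  a 0 • LinearMap.proj 0 + a 1 • LinearMap.proj 1 + a 2 • LinearMap.proj 2

lemma phi3_apply (a v : Fin 3 → F) :
    phi3 a v = a 0 * v 0 + a 1 * v 1 + a 2 * v 2 := by
  simp [phi3]

lemma phi3_surj {a : Fin 3 → F} (ha : a ≠ 0) : Function.Surjective (phi3 a) := by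
  obtain ⟨j, hj⟩ : ∃ j, a j ≠ 0 := by
    by_contra hcon
    push_neg at hcon
    exact ha (funext hcon)
  intro c
  refine ⟨Pi.single j (c / a j), ?_⟩
  fin_cases j <;>
    simp [phi3_apply, Pi.single_apply] <;>
    exact mul_div_cancel₀ c hj

lemma finrank_ker_phi3 {a : Fin 3 → F} (ha : a ≠ 0) :
    finrank F (LinearMap.ker (phi3 a)) = 2 := by
  have h1 := LinearMap.finrank_range_add_finrank_ker (phi3 a)
  rw [LinearMap.range_eq_top.2 (phi3_surj ha)] at h1
  simp only [finrank_top, Module.finrank_self] at h1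
  have h3 : finrank F (Fin 3 → F) = 3 := by simp
  omega

lemma span_le_ker {a w : Fin 3 → F} :
    Submodule.span F {w} ≤ LinearMap.ker (phi3 a) ↔ phi3 a w = 0 := by
  rw [Submodule.span_singleton_le_iff_mem, LinearMap.mem_ker]

def hpt (F : Type) [Field F] : Option (Option F) → (Fin 3 → F)
  | none => ![0, 0, 1]
  | some none => ![0, 1, 0]
  | some (some t) => ![1, t, t ^ 2]

lemma hpt_ne_zero (i : Option (Option F)) : hpt F i ≠ 0 := by
  rcases i with _ | _ | t
  · exact fun h => (one_ne_zero : (1:F) ≠ 0) (by simpa [hpt] using congrFun h 2)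
  · exact fun h => (one_ne_zero : (1:F) ≠ 0) (by simpa [hpt] using congrFun h 1)
  · exact fun h => (one_ne_zero : (1:F) ≠ 0) (by simpa [hpt] using congrFun h 0)

lemma ker_hpt_inj [CharP F 2] :
    Function.Injective (fun i => LinearMap.ker (phi3 (hpt F i))) := by
  have hmem : ∀ (i j : Option (Option F)),
      LinearMap.ker (phi3 (hpt F i)) = LinearMap.ker (phi3 (hpt F j)) →
      ∀ v, phi3 (hpt F i) v = 0 → phi3 (hpt F j) v = 0 := by
    intro i j hij v hv
    have : v ∈ LinearMap.ker (phi3 (hpt F j)) := hij ▸ LinearMap.mem_ker.2 hv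
    exact LinearMap.mem_ker.1 this
  intro i j hij
  simp only at hij
  rcases i with _ | _ | t <;> rcases j with _ | _ | s
  · rfl
  · exfalso
    have hw := hmem _ _ hij ![0,1,0] (by simp [phi3_apply, hpt])
    simp [phi3_apply, hpt] at hw
  · exfalso
    have hw := hmem _ _ hij ![1,0,0] (by simp [phi3_apply, hpt])
    simp [phi3_apply, hpt] at hw
  · exfalso
    have hw := hmem _ _ hij ![0,0,1] (by simp [phi3_apply, hpt])
    simp [phi3_apply, hpt] at hw
  · rfl
  · exfalso
    have hw := hmem _ _ hij ![1,0,0] (by simp [phi3_apply, hpt])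
    simp [phi3_apply, hpt] at hw
  · exfalso
    have hw := hmem _ _ hij ![t ^ 2, 0, 1] (by simp [phi3_apply, hpt, CharTwo.add_self_eq_zero])
    simp [phi3_apply, hpt] at hw
  · exfalso
    have hw := hmem _ _ hij ![t, 1, 0] (by simp [phi3_apply, hpt, CharTwo.add_self_eq_zero])
    simp [phi3_apply, hpt] at hw
  · have hts : t = s := by
      by_contra hne
      have hw := hmem _ _ hij ![t ^ 2, 0, 1]
        (by simp [phi3_apply, hpt, CharTwo.add_self_eq_zero])
      simp only [phi3_apply, hpt, Matrix.cons_val_zero, Matrix.cons_val_one, Matrix.head_cons,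
        Matrix.cons_val_two, Matrix.tail_cons] at hw
      have h2 : (t + s) ^ 2 = 0 := by
        rw [CharTwo.add_sq]
        linear_combination hw
      have h3 := pow_eq_zero_iff (n := 2) (by norm_num) |>.1 h2
      exact hne (by rw [eq_neg_of_add_eq_zero_left h3, CharTwo.neg_eq])
    rw [hts]
end Funct

/-- For `q = 2^h` (`h ≥ 1`) and `F` the field with `q` elements, every nonzero
vector indexed by the lines of `PG(2,q)` (the 2-dimensional subspaces of `F³`) whose
incidence sums at every point (1-dimensional subspace) vanish over `F₂` has Hamming weight
at least `2^h + 2`, and some such vector has Hamming weight exactly `2^h + 2`. -/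
theorem statement_3 (h : ℕ) (hh : 1 ≤ h) (F : Type) [Field F] [Fintype F]
    (hF : Fintype.card F = 2 ^ h) :
    letI : ∀ a b : Submodule F (Fin 3 → F), Decidable (a ≤ b) :=
      fun _ _ => Classical.propDecidable _
    letI : Fintype (Submodule F (Fin 3 → F)) := Fintype.ofFinite _
    (∀ x : {W : Submodule F (Fin 3 → F) // Module.finrank F W = 2} → ZMod 2, x ≠ 0 →
      (∀ p : {W : Submodule F (Fin 3 → F) // Module.finrank F W = 1},
        (∑ ℓ : {W : Submodule F (Fin 3 → F) // Module.finrank F W = 2},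
          if p.1 ≤ ℓ.1 then x ℓ else 0) = 0) →
      2 ^ h + 2 ≤ hammingNorm x) ∧
    (∃ x : {W : Submodule F (Fin 3 → F) // Module.finrank F W = 2} → ZMod 2, x ≠ 0 ∧
      (∀ p : {W : Submodule F (Fin 3 → F) // Module.finrank F W = 1},
        (∑ ℓ : {W : Submodule F (Fin 3 → F) // Module.finrank F W = 2},
          if p.1 ≤ ℓ.1 then x ℓ else 0) = 0) ∧
      hammingNorm x = 2 ^ h + 2) := by
  letI : ∀ a b : Submodule F (Fin 3 → F), Decidable (a ≤ b) :=
    fun _ _ => Classical.propDecidable _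
  letI : Fintype (Submodule F (Fin 3 → F)) := Fintype.ofFinite _
  haveI hchar : CharP F 2 := by
    have hchar := ringChar.charP F
    obtain ⟨n, hprime, hcard⟩ := FiniteField.card F (ringChar F)
    have hdvd : ringChar F ∣ 2 ^ h := by
      rw [← hF, hcard]
      exact dvd_pow_self _ (by positivity)
    have h2 : ringChar F = 2 :=
      (Nat.prime_dvd_prime_iff_eq hprime Nat.prime_two).1 (hprime.dvd_of_dvd_pow hdvd)
    rwa [h2] at hchar
  classical
  constructor
  · -- lower bound
    intro x hx hsum
    obtain ⟨ℓ₀, hℓ₀⟩ : ∃ ℓ₀, x ℓ₀ ≠ 0 := by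
      by_contra hc; push_neg at hc
      exact hx (funext hc)
    obtain ⟨g, hginj, hg⟩ := points_on_line ℓ₀.1 ℓ₀.2
    have hstep : ∀ i : Option F,
        ∃ m : {W : Submodule F (Fin 3 → F) // Module.finrank F W = 2},
          x m ≠ 0 ∧ m ≠ ℓ₀ ∧ g i ≤ m.1 := by
      intro i
      have hsum0 := hsum ⟨g i, (hg i).1⟩
      rw [← Finset.add_sum_erase _ _ (mem_univ ℓ₀)] at hsum0
      rw [if_pos (by exact (hg i).2)] at hsum0
      have hrest : (∑ ℓ ∈ univ.erase ℓ₀, if g i ≤ ℓ.1 then x ℓ else 0) ≠ 0 := by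
        intro h0
        rw [h0, add_zero] at hsum0
        exact hℓ₀ hsum0
      obtain ⟨m, hm, hmne⟩ := Finset.exists_ne_zero_of_sum_ne_zero hrest
      by_cases hle : g i ≤ m.1
      · refine ⟨m, ?_, (mem_erase.1 hm).1, hle⟩
        rwa [if_pos hle] at hmne
      · rw [if_neg hle] at hmne
        exact absurd rfl hmne
    choose m hm1 hm2 hm3 using hstep
    have hminj : Function.Injective m := by
      intro i j hij
      by_contra hne
      have hgne : g i ≠ g j := fun hc => hne (hginj hc)
      have : (m i).1 = ℓ₀.1 :=
        lines_eq_of_two (hg i).1 (hg j).1 hgne (hm3 i) (hij ▸ hm3 j)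
          (hg i).2 (hg j).2 (m i).2 ℓ₀.2
      exact hm2 i (Subtype.ext this)
    have hmem : ∀ i, m i ∈ (univ.filter fun ℓ => x ℓ ≠ 0).erase ℓ₀ := by
      intro i
      exact mem_erase.2 ⟨hm2 i, mem_filter.2 ⟨mem_univ _, hm1 i⟩⟩
    have hcard1 : Fintype.card (Option F) ≤ ((univ.filter fun ℓ => x ℓ ≠ 0).erase ℓ₀).card := by
      rw [← Finset.card_univ]
      exact Finset.card_le_card_of_injOn m (fun i _ => hmem i) hminj.injOn
    have hℓ₀mem : ℓ₀ ∈ univ.filter fun ℓ => x ℓ ≠ 0 := mem_filter.2 ⟨mem_univ _, hℓ₀⟩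
    rw [Finset.card_erase_of_mem hℓ₀mem] at hcard1
    have hoc : Fintype.card (Option F) = 2 ^ h + 1 := by
      rw [Fintype.card_option, hF]
    have hnorm : hammingNorm x = (univ.filter fun ℓ => x ℓ ≠ 0).card := by
      unfold hammingNorm
      congr 1
    have hpos : 1 ≤ (univ.filter fun ℓ => x ℓ ≠ 0).card :=
      Finset.card_pos.2 ⟨ℓ₀, hℓ₀mem⟩
    rw [hnorm]
    rw [hoc] at hcard1
    calc 2 ^ h + 2 = (2 ^ h + 1) + 1 := by ring
      _ ≤ ((univ.filter fun ℓ => x ℓ ≠ 0).card - 1) + 1 := Nat.add_le_add_right hcard1 1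
      _ = (univ.filter fun ℓ => x ℓ ≠ 0).card := Nat.succ_pred_eq_of_pos hpos
  · -- existence: dual hyperoval
    set e : Option (Option F) → {W : Submodule F (Fin 3 → F) // Module.finrank F W = 2} :=
      fun i => ⟨LinearMap.ker (phi3 (hpt F i)), finrank_ker_phi3 (hpt_ne_zero i)⟩ with he
    have heinj : Function.Injective e := by
      intro i j hij
      exact ker_hpt_inj (congrArg Subtype.val hij)
    set T : Finset {W : Submodule F (Fin 3 → F) // Module.finrank F W = 2} :=
      univ.image e with hT
    refine ⟨fun ℓ => if ℓ ∈ T then 1 else 0, ?_, ?_, ?_⟩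
    · intro h0
      have := congrFun h0 (e none)
      rw [if_pos (mem_image.2 ⟨none, mem_univ _, rfl⟩)] at this
      exact one_ne_zero this
    · intro p
      obtain ⟨w, hw0, hwspan⟩ := exists_gen p.1 p.2
      have step1 : (∑ ℓ : {W : Submodule F (Fin 3 → F) // Module.finrank F W = 2},
          if p.1 ≤ ℓ.1 then (if ℓ ∈ T then (1 : ZMod 2) else 0) else 0)
          = ∑ ℓ : {W : Submodule F (Fin 3 → F) // Module.finrank F W = 2},
            if (ℓ ∈ T ∧ p.1 ≤ ℓ.1) then (1 : ZMod 2) else 0 := by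
        apply Finset.sum_congr rfl
        intro ℓ _
        by_cases h1 : p.1 ≤ ℓ.1 <;> by_cases h2 : ℓ ∈ T <;> simp [h1, h2]
      rw [step1, Finset.sum_boole]
      have step2 : (univ.filter fun ℓ => ℓ ∈ T ∧ p.1 ≤ ℓ.1) = T.filter fun ℓ => p.1 ≤ ℓ.1 := by
        ext ℓ
        simp [mem_filter]
      rw [step2, hT, Finset.filter_image, Finset.card_image_of_injective _ heinj]
      have step3 : (univ.filter fun i => p.1 ≤ (e i).1)
          = univ.filter fun i => phi3 (hpt F i) w = 0 := by
        apply Finset.filter_congr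
        intro i _
        rw [hwspan, he]
        exact span_le_ker
      rw [step3]
      rw [Finset.card_filter]
      push_cast
      rw [Fintype.sum_option, Fintype.sum_option]
      have hn : (if phi3 (hpt F none) w = 0 then (1 : ZMod 2) else 0)
          = if w 2 = 0 then 1 else 0 := by
        simp [phi3_apply, hpt]
      have hsn : (if phi3 (hpt F (some none)) w = 0 then (1 : ZMod 2) else 0)
          = if w 1 = 0 then 1 else 0 := by
        simp [phi3_apply, hpt]
      have hss : ∀ t : F, (if phi3 (hpt F (some (some t))) w = 0 then (1 : ZMod 2) else 0)
          = if w 0 + t * w 1 + t ^ 2 * w 2 = 0 then 1 else 0 := by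
        intro t
        have : phi3 (hpt F (some (some t))) w = w 0 + t * w 1 + t ^ 2 * w 2 := by
          rw [phi3_apply]
          simp [hpt]
          try ring
        rw [this]
      rw [hn, hsn]
      rw [Finset.sum_congr rfl (fun t _ => hss t), Finset.sum_boole]
      have hww : ¬(w 0 = 0 ∧ w 1 = 0 ∧ w 2 = 0) := by
        rintro ⟨h0, h1, h2⟩
        apply hw0
        funext k
        fin_cases k <;> assumption
      have := quad_count (w 0) (w 1) (w 2) hww
      linear_combination this
    · have hset : (univ.filter fun ℓ => (if ℓ ∈ T then (1 : ZMod 2) else 0) ≠ 0) = T := by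
        ext ℓ
        by_cases hℓ : ℓ ∈ T <;> simp [hℓ]
      have hnorm : hammingNorm (fun ℓ => if ℓ ∈ T then (1 : ZMod 2) else 0)
          = (univ.filter fun ℓ => (if ℓ ∈ T then (1 : ZMod 2) else 0) ≠ 0).card := by
        unfold hammingNorm
        congr 1
      rw [hnorm, hset, hT, Finset.card_image_of_injective _ heinj, Finset.card_univ]
      simp [hF]
end

section
/- Let q ≥ 2, let (P, L) be a finite projective plane of order q, and let B be a projective bundle of ovals in it. Then any two distinct points of P lie on exactly one common oval of B; in particular, the points of P together with the ovals of B (as lines) form a projective plane of order q, and every point lies on exactly q+1 ovals of B. -/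
/-- Auxiliary: a projective plane of order `q` has `q² + q + 1` points. -/
theorem card_points_aux (q : ℕ) (P : Type) [Fintype P] [DecidableEq P]
    (L : Finset (Finset P)) (hL : IsProjectivePlane q L) :
    Fintype.card P = q ^ 2 + q + 1 := by
  obtain ⟨a, b, c, d, hab, hac, had, hbc, hbd, hcd, hquad⟩ := hL.nondeg
  obtain ⟨ℓ₀, ⟨hℓ₀L, haℓ, hbℓ⟩, -⟩ := hL.exists_unique_line a b hab
  -- c is not on ℓ₀
  have hcℓ : c ∉ ℓ₀ := by
    intro hc
    have hsub : ({a, b, c} : Finset P) ⊆ ℓ₀ ∩ {a, b, c, d} := by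
      intro x hx
      simp only [Finset.mem_insert, Finset.mem_singleton] at hx
      rcases hx with rfl | rfl | rfl <;> simp_all [Finset.mem_inter]
    have h3 : ({a, b, c} : Finset P).card = 3 := by
      rw [Finset.card_insert_of_notMem (by simp [hab, hac]),
        Finset.card_insert_of_notMem (by simp [hbc]), Finset.card_singleton]
    have := Finset.card_le_card hsub
    have := hquad ℓ₀ hℓ₀L
    omega
  -- lines through c
  set Lp := L.filter (fun m => c ∈ m) with hLpdef
  have hLpcard : Lp.card = q + 1 := by
    rw [← hL.card_line ℓ₀ hℓ₀L]
    symm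
    apply Finset.card_bij (fun x hx =>
      (hL.exists_unique_line c x (fun h => hcℓ (h ▸ hx))).choose)
    · intro x hx
      have hs := (hL.exists_unique_line c x (fun h => hcℓ (h ▸ hx))).choose_spec.1
      simp only [hLpdef, Finset.mem_filter]
      exact ⟨hs.1, hs.2.1⟩
    · intro x hx y hy heq
      have hsx := (hL.exists_unique_line c x (fun h => hcℓ (h ▸ hx))).choose_spec.1
      have hsy := (hL.exists_unique_line c y (fun h => hcℓ (h ▸ hy))).choose_spec.1
      set m := (hL.exists_unique_line c x (fun h => hcℓ (h ▸ hx))).choose with hm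
      have hmne : m ≠ ℓ₀ := fun h => hcℓ (h ▸ hsx.2.1)
      have huniq := (hL.exists_unique_point m hsx.1 ℓ₀ hℓ₀L hmne)
      have h1 : x ∈ m ∧ x ∈ ℓ₀ := ⟨hsx.2.2, hx⟩
      have h2 : y ∈ m ∧ y ∈ ℓ₀ := ⟨heq ▸ hsy.2.2, hy⟩
      obtain ⟨z, hz, hzu⟩ := huniq
      rw [hzu x h1, hzu y h2]
    · intro m hm
      simp only [hLpdef, Finset.mem_filter] at hm
      have hmne : m ≠ ℓ₀ := fun h => hcℓ (h ▸ hm.2)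
      obtain ⟨x, ⟨hxm, hxℓ⟩, -⟩ := hL.exists_unique_point m hm.1 ℓ₀ hℓ₀L hmne
      refine ⟨x, hxℓ, ?_⟩
      have hs := (hL.exists_unique_line c x (fun h => hcℓ (h ▸ hxℓ))).choose_spec
      exact (hs.2 m ⟨hm.1, hm.2, hxm⟩).symm
  -- partition of points other than c
  have hcover : Lp.biUnion (fun m => m.erase c) = Finset.univ.erase c := by
    apply Finset.Subset.antisymm
    · intro x hx
      simp only [Finset.mem_biUnion, Finset.mem_erase] at hx
      obtain ⟨m, -, hxc, -⟩ := hx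
      simp [Finset.mem_erase, hxc]
    · intro x hx
      simp only [Finset.mem_erase, Finset.mem_univ, and_true] at hx
      obtain ⟨m, ⟨hmL, hcm, hxm⟩, -⟩ := hL.exists_unique_line c x (Ne.symm hx)
      simp only [Finset.mem_biUnion]
      exact ⟨m, by simp [hLpdef, Finset.mem_filter, hmL, hcm], by simp [Finset.mem_erase, hx, hxm]⟩
  have hdisj : ∀ m₁ ∈ Lp, ∀ m₂ ∈ Lp, m₁ ≠ m₂ → Disjoint (m₁.erase c) (m₂.erase c) := by
    intro m₁ h₁ m₂ h₂ hne
    simp only [hLpdef, Finset.mem_filter] at h₁ h₂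
    rw [Finset.disjoint_left]
    intro x hx₁ hx₂
    rw [Finset.mem_erase] at hx₁ hx₂
    obtain ⟨z, hz, hzu⟩ := hL.exists_unique_point m₁ h₁.1 m₂ h₂.1 hne
    have e1 := hzu x ⟨hx₁.2, hx₂.2⟩
    have e2 := hzu c ⟨h₁.2, h₂.2⟩
    exact hx₁.1 (e1.trans e2.symm)
  have hsum : (Lp.biUnion (fun m => m.erase c)).card = (q + 1) * q := by
    rw [Finset.card_biUnion hdisj]
    have : ∀ m ∈ Lp, (m.erase c).card = q := by
      intro m hm
      simp only [hLpdef, Finset.mem_filter] at hm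
      rw [Finset.card_erase_of_mem hm.2, hL.card_line m hm.1]; omega
    rw [Finset.sum_congr rfl this, Finset.sum_const, hLpcard, smul_eq_mul]
  rw [hcover] at hsum
  rw [Finset.card_erase_of_mem (Finset.mem_univ c), Finset.card_univ] at hsum
  have hpos : 0 < Fintype.card P := Fintype.card_pos_iff.mpr ⟨c⟩
  have hq2 : q ^ 2 = q * q := sq q
  have h2 : (q + 1) * q = q * q + q := by ring
  rw [hq2]
  set k := q * q
  omega

set_option maxHeartbeats 1000000 in
/-- For a projective bundle `B` in a finite projective plane of order `q ≥ 2`,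
any two distinct points lie on exactly one common oval of `B`; in particular the points
together with the ovals of `B` form a projective plane of order `q`, and every point lies
on exactly `q + 1` ovals of `B`. -/
theorem statement_7 (q : ℕ) (hq : 2 ≤ q) (P : Type) [Fintype P] [DecidableEq P]
    (L : Finset (Finset P)) (hL : IsProjectivePlane q L)
    (B : Finset (Finset P)) (hB : IsProjectiveBundle q L B) :
    (∀ p₁ p₂ : P, p₁ ≠ p₂ → ∃! o, o ∈ B ∧ p₁ ∈ o ∧ p₂ ∈ o) ∧
    IsProjectivePlane q B ∧
    (∀ p : P, (B.filter fun o => p ∈ o).card = q + 1) := by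
  obtain ⟨hBcard, hoval, hmeet⟩ := hB
  have hN := card_points_aux q P L hL
  -- uniqueness: two distinct points lie on at most one oval
  have huniq : ∀ (p₁ p₂ : P), p₁ ≠ p₂ → ∀ o₁ ∈ B, ∀ o₂ ∈ B,
      p₁ ∈ o₁ → p₂ ∈ o₁ → p₁ ∈ o₂ → p₂ ∈ o₂ → o₁ = o₂ := by
    intro p₁ p₂ hne o₁ h₁ o₂ h₂ ha1 hb1 ha2 hb2
    by_contra hno
    have hsub : ({p₁, p₂} : Finset P) ⊆ o₁ ∩ o₂ := by
      intro x hx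
      simp only [Finset.mem_insert, Finset.mem_singleton] at hx
      rcases hx with rfl | rfl <;> simp [Finset.mem_inter, ha1, ha2, hb1, hb2]
    have h2le : 2 ≤ (o₁ ∩ o₂).card := by
      rw [← Finset.card_pair hne]; exact Finset.card_le_card hsub
    rw [hmeet o₁ h₁ o₂ h₂ hno] at h2le
    omega
  -- existence via counting ordered pairs
  have hdisj2 : ∀ o₁ ∈ B, ∀ o₂ ∈ B, o₁ ≠ o₂ → Disjoint o₁.offDiag o₂.offDiag := by
    intro o₁ h₁ o₂ h₂ hne
    rw [Finset.disjoint_left]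
    rintro ⟨x, y⟩ hx hy
    rw [Finset.mem_offDiag] at hx hy
    exact hne (huniq x y hx.2.2 o₁ h₁ o₂ h₂ hx.1 hx.2.1 hy.1 hy.2.1)
  have hbu : B.biUnion (fun o => o.offDiag) = Finset.univ.offDiag := by
    apply Finset.eq_of_subset_of_card_le
    · intro z hz
      simp only [Finset.mem_biUnion] at hz
      obtain ⟨o, -, hz⟩ := hz
      rw [Finset.mem_offDiag] at hz ⊢
      exact ⟨Finset.mem_univ _, Finset.mem_univ _, hz.2.2⟩
    · rw [Finset.offDiag_card, Finset.card_biUnion hdisj2, Finset.card_univ, hN]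
      have hterm : ∀ o ∈ B, o.offDiag.card = (q ^ 2 + q + 1) - 1 := by
        intro o ho
        rw [Finset.offDiag_card, (hoval o ho).1]
        have : (q + 1) * (q + 1) = (q ^ 2 + q) + (q + 1) := by ring
        rw [this, Nat.add_sub_cancel]
        omega
      rw [Finset.sum_congr rfl hterm, Finset.sum_const, hBcard, smul_eq_mul]
      have h1 : (q ^ 2 + q + 1) * (q ^ 2 + q + 1) =
          (q ^ 2 + q + 1) * (q ^ 2 + q + 1 - 1) + (q ^ 2 + q + 1) := by
        have : q ^ 2 + q + 1 - 1 = q ^ 2 + q := by omega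
        rw [this]; ring
      rw [h1, Nat.add_sub_cancel]
  have claim1 : ∀ p₁ p₂ : P, p₁ ≠ p₂ → ∃! o, o ∈ B ∧ p₁ ∈ o ∧ p₂ ∈ o := by
    intro p₁ p₂ hne
    have hmem : (p₁, p₂) ∈ B.biUnion (fun o => o.offDiag) := by
      rw [hbu, Finset.mem_offDiag]
      exact ⟨Finset.mem_univ _, Finset.mem_univ _, hne⟩
    simp only [Finset.mem_biUnion] at hmem
    obtain ⟨o, ho, hpo⟩ := hmem
    rw [Finset.mem_offDiag] at hpo
    refine ⟨o, ⟨ho, hpo.1, hpo.2.1⟩, ?_⟩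
    rintro o' ⟨ho', hp1, hp2⟩
    exact huniq p₁ p₂ hne o' ho' o ho hp1 hp2 hpo.1 hpo.2.1
  -- every point lies on exactly q+1 ovals
  have claim3 : ∀ p : P, (B.filter fun o => p ∈ o).card = q + 1 := by
    intro p
    set Bp := B.filter (fun o => p ∈ o) with hBpdef
    have hcover : Bp.biUnion (fun o => o.erase p) = Finset.univ.erase p := by
      apply Finset.Subset.antisymm
      · intro x hx
        simp only [Finset.mem_biUnion, Finset.mem_erase] at hx
        obtain ⟨o, -, hxp, -⟩ := hx
        simp [Finset.mem_erase, hxp]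
      · intro x hx
        simp only [Finset.mem_erase, Finset.mem_univ, and_true] at hx
        obtain ⟨o, ⟨hoB, hpo, hxo⟩, -⟩ := claim1 p x (Ne.symm hx)
        simp only [Finset.mem_biUnion]
        exact ⟨o, by simp [hBpdef, Finset.mem_filter, hoB, hpo],
          by simp [Finset.mem_erase, hx, hxo]⟩
    have hdisjp : ∀ o₁ ∈ Bp, ∀ o₂ ∈ Bp, o₁ ≠ o₂ → Disjoint (o₁.erase p) (o₂.erase p) := by
      intro o₁ h₁ o₂ h₂ hne
      simp only [hBpdef, Finset.mem_filter] at h₁ h₂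
      rw [Finset.disjoint_left]
      intro x hx₁ hx₂
      rw [Finset.mem_erase] at hx₁ hx₂
      exact hne (huniq p x (Ne.symm hx₁.1) o₁ h₁.1 o₂ h₂.1 h₁.2 hx₁.2 h₂.2 hx₂.2)
    have hsum : (Bp.biUnion (fun o => o.erase p)).card = Bp.card * q := by
      rw [Finset.card_biUnion hdisjp]
      have : ∀ o ∈ Bp, (o.erase p).card = q := by
        intro o ho
        simp only [hBpdef, Finset.mem_filter] at ho
        rw [Finset.card_erase_of_mem ho.2, (hoval o ho.1).1]
        omega
      rw [Finset.sum_congr rfl this, Finset.sum_const, smul_eq_mul]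
    rw [hcover, Finset.card_erase_of_mem (Finset.mem_univ p), Finset.card_univ, hN] at hsum
    have hqpos : 0 < q := by omega
    have : Bp.card * q = (q + 1) * q := by
      have e1 : q ^ 2 + q + 1 - 1 = q ^ 2 + q := by simp
      have e2 : (q + 1) * q = q ^ 2 + q := by ring
      rw [e2, ← e1]
      exact hsum.symm
    exact Nat.eq_of_mul_eq_mul_right hqpos this
  -- nondegeneracy quadrilateral for B
  have hnondegB : ∃ a b c d : P, a ≠ b ∧ a ≠ c ∧ a ≠ d ∧ b ≠ c ∧ b ≠ d ∧ c ≠ d ∧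
      ∀ ℓ ∈ B, (ℓ ∩ ({a, b, c, d} : Finset P)).card ≤ 2 := by
    obtain ⟨a, b, -, -, hab, -⟩ := hL.nondeg
    obtain ⟨oab, ⟨hoabB, haab, hbab⟩, huab⟩ := claim1 a b hab
    have hcard_oab : oab.card = q + 1 := (hoval oab hoabB).1
    -- pick c outside oab
    have hexc : ∃ x, x ∉ oab := by
      by_contra h'
      push_neg at h'
      have he := Finset.eq_univ_iff_forall.mpr h'
      have : (Finset.univ : Finset P).card = q + 1 := by rw [← he, hcard_oab]
      rw [Finset.card_univ, hN] at this
      nlinarith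
    obtain ⟨c, hc⟩ := hexc
    have hac : a ≠ c := fun h => hc (h ▸ haab)
    have hbc : b ≠ c := fun h => hc (h ▸ hbab)
    obtain ⟨oac, ⟨hoacB, haac, hcac⟩, huac⟩ := claim1 a c hac
    obtain ⟨obc, ⟨hobcB, hbbc, hcbc⟩, hubc⟩ := claim1 b c hbc
    have hbac : b ∉ oac := by
      intro hb
      have : oac = oab := huab oac ⟨hoacB, haac, hb⟩
      exact hc (this ▸ hcac)
    have haobc : a ∉ obc := by
      intro ha
      have : obc = oab := huab obc ⟨hobcB, ha, hbbc⟩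
      exact hc (this ▸ hcbc)
    -- pick d outside oab ∪ oac ∪ obc (covered by a set of size ≤ 3q)
    have hexd : ∃ x, x ∉ oab ∪ oac.erase a ∪ (obc \ {b, c}) := by
      by_contra h'
      push_neg at h'
      have hU : oab ∪ oac.erase a ∪ (obc \ {b, c}) = Finset.univ :=
        Finset.eq_univ_iff_forall.mpr h'
      have h1 : (oab ∪ oac.erase a ∪ (obc \ {b, c})).card ≤ 3 * q := by
        calc (oab ∪ oac.erase a ∪ (obc \ {b, c})).card
            ≤ (oab ∪ oac.erase a).card + (obc \ {b, c}).card := Finset.card_union_le _ _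
          _ ≤ oab.card + (oac.erase a).card + (obc \ {b, c}).card := by
              have := Finset.card_union_le oab (oac.erase a); omega
          _ ≤ 3 * q := by
              rw [hcard_oab, Finset.card_erase_of_mem haac, (hoval oac hoacB).1,
                Finset.card_sdiff_of_subset (by
                  intro x hx
                  simp only [Finset.mem_insert, Finset.mem_singleton] at hx
                  rcases hx with rfl | rfl
                  · exact hbbc
                  · exact hcbc), (hoval obc hobcB).1, Finset.card_pair hbc]
              omega
      rw [hU, Finset.card_univ, hN] at h1
      nlinarith
    obtain ⟨d, hd⟩ := hexd
    have hdab : d ∉ oab := fun h =>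
      hd (Finset.mem_union_left _ (Finset.mem_union_left _ h))
    have hdea : d ∉ oac.erase a := fun h =>
      hd (Finset.mem_union_left _ (Finset.mem_union_right _ h))
    have hdsd : d ∉ obc \ {b, c} := fun h => hd (Finset.mem_union_right _ h)
    have had : a ≠ d := fun h => hdab (h ▸ haab)
    have hbd : b ≠ d := fun h => hdab (h ▸ hbab)
    have hdac : d ∉ oac := fun h => hdea (Finset.mem_erase.mpr ⟨Ne.symm had, h⟩)
    have hcd : c ≠ d := fun h => hdac (h ▸ hcac)
    have hdbc : d ∉ obc := by
      intro h
      refine hdsd (Finset.mem_sdiff.mpr ⟨h, ?_⟩)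
      simp only [Finset.mem_insert, Finset.mem_singleton]
      rintro (rfl | rfl)
      · exact hbd rfl
      · exact hcd rfl
    refine ⟨a, b, c, d, hab, hac, had, hbc, hbd, hcd, ?_⟩
    intro ℓ hℓ
    by_contra hgt
    push_neg at hgt
    rw [Finset.two_lt_card_iff] at hgt
    obtain ⟨x, y, z, hx, hy, hz, hxy, hxz, hyz⟩ := hgt
    simp only [Finset.mem_inter, Finset.mem_insert, Finset.mem_singleton] at hx hy hz
    obtain ⟨hxℓ, hx4⟩ := hx
    obtain ⟨hyℓ, hy4⟩ := hy
    obtain ⟨hzℓ, hz4⟩ := hz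
    have K1 : ¬(a ∈ ℓ ∧ b ∈ ℓ ∧ c ∈ ℓ) := by
      rintro ⟨h1, h2, h3⟩
      exact hc ((huab ℓ ⟨hℓ, h1, h2⟩) ▸ h3)
    have K2 : ¬(a ∈ ℓ ∧ b ∈ ℓ ∧ d ∈ ℓ) := by
      rintro ⟨h1, h2, h3⟩
      exact hdab ((huab ℓ ⟨hℓ, h1, h2⟩) ▸ h3)
    have K3 : ¬(a ∈ ℓ ∧ c ∈ ℓ ∧ d ∈ ℓ) := by
      rintro ⟨h1, h2, h3⟩
      exact hdac ((huac ℓ ⟨hℓ, h1, h2⟩) ▸ h3)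
    have K4 : ¬(b ∈ ℓ ∧ c ∈ ℓ ∧ d ∈ ℓ) := by
      rintro ⟨h1, h2, h3⟩
      exact hdbc ((hubc ℓ ⟨hℓ, h1, h2⟩) ▸ h3)
    clear hL hN huniq hdisj2 hbu claim1 claim3 hBcard hoval hmeet hdsd hdea hd hcard_oab
      hdab hdac hdbc hc hbac haobc huab huac hubc hoabB hoacB hobcB haab hbab haac hcac
      hbbc hcbc hq hℓ
    rcases hx4 with rfl | rfl | rfl | rfl <;> rcases hy4 with rfl | rfl | rfl | rfl <;>
      rcases hz4 with rfl | rfl | rfl | rfl <;> tauto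
  obtain ⟨a, b, c, d, h1, h2, h3, h4, h5, h6, h7⟩ := hnondegB
  refine ⟨claim1, ⟨claim1, ?_, ⟨a, b, c, d, h1, h2, h3, h4, h5, h6, h7⟩,
    fun o ho => (hoval o ho).1⟩, claim3⟩
  intro o₁ ho₁ o₂ ho₂ hne
  have hone := hmeet o₁ ho₁ o₂ ho₂ hne
  rw [Finset.card_eq_one] at hone
  obtain ⟨x, hx⟩ := hone
  have hxm : x ∈ o₁ ∩ o₂ := hx ▸ Finset.mem_singleton_self x
  rw [Finset.mem_inter] at hxm
  refine ⟨x, hxm, ?_⟩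
  intro y hy
  have : y ∈ o₁ ∩ o₂ := Finset.mem_inter.mpr hy
  rw [hx, Finset.mem_singleton] at this
  exact this
end

section
/- Let q ≥ 2, let (P, L) be a finite projective plane of order q, let B be a projective bundle, and let ℓ ∈ L be a line. Then for every point R ∈ ℓ there is exactly one oval o ∈ B with o ∩ ℓ = {R}; consequently ℓ has exactly q+1 tangent ovals in B, one at each of its points. -/
open Finset

section PP
variable {q : ℕ} {P : Type} [DecidableEq P] {L : Finset (Finset P)}

lemma pp_line_unique (hL : IsProjectivePlane q L) {m₁ m₂ : Finset P} (h₁ : m₁ ∈ L)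
    (h₂ : m₂ ∈ L) {x y : P} (hxy : x ≠ y) (hx1 : x ∈ m₁) (hy1 : y ∈ m₁)
    (hx2 : x ∈ m₂) (hy2 : y ∈ m₂) : m₁ = m₂ := by
  obtain ⟨m, _, hu⟩ := hL.exists_unique_line x y hxy
  rw [hu m₁ ⟨h₁, hx1, hy1⟩, hu m₂ ⟨h₂, hx2, hy2⟩]

lemma pp_lines_through_card (hL : IsProjectivePlane q L) {p : P} {ℓ₀ : Finset P}
    (h₀ : ℓ₀ ∈ L) (hp : p ∉ ℓ₀) : (L.filter (fun m => p ∈ m)).card = q + 1 := by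
  classical
  have key : ∀ m ∈ L.filter (fun m => p ∈ m), m ≠ ℓ₀ := by
    intro m hm h
    exact hp (h ▸ (mem_filter.mp hm).2)
  have hmem : ∀ m ∈ L.filter (fun m => p ∈ m), m ∈ L := fun m hm => (mem_filter.mp hm).1
  rw [← hL.card_line ℓ₀ h₀]
  refine Finset.card_bij
    (fun m hm => Classical.choose (hL.exists_unique_point m (hmem m hm) ℓ₀ h₀ (key m hm)))
    ?_ ?_ ?_
  · intro m hm
    exact (Classical.choose_spec (hL.exists_unique_point m (hmem m hm) ℓ₀ h₀ (key m hm))).1.2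
  · intro m₁ hm₁ m₂ hm₂ heq
    have h1 := (Classical.choose_spec (hL.exists_unique_point m₁ (hmem m₁ hm₁) ℓ₀ h₀ (key m₁ hm₁))).1
    have h2 := (Classical.choose_spec (hL.exists_unique_point m₂ (hmem m₂ hm₂) ℓ₀ h₀ (key m₂ hm₂))).1
    have hxp : Classical.choose (hL.exists_unique_point m₁ (hmem m₁ hm₁) ℓ₀ h₀ (key m₁ hm₁)) ≠ p :=
      fun h => hp (h ▸ h1.2)
    have heq' : Classical.choose (hL.exists_unique_point m₁ (hmem m₁ hm₁) ℓ₀ h₀ (key m₁ hm₁))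
        = Classical.choose (hL.exists_unique_point m₂ (hmem m₂ hm₂) ℓ₀ h₀ (key m₂ hm₂)) := heq
    exact pp_line_unique hL (hmem m₁ hm₁) (hmem m₂ hm₂) hxp h1.1 (mem_filter.mp hm₁).2
      (heq' ▸ h2.1) (mem_filter.mp hm₂).2
  · intro x hx
    have hpx : p ≠ x := fun h => hp (h ▸ hx)
    obtain ⟨m, ⟨hmL, hpm, hxm⟩, _⟩ := hL.exists_unique_line p x hpx
    have hm : m ∈ L.filter (fun m => p ∈ m) := mem_filter.mpr ⟨hmL, hpm⟩
    refine ⟨m, hm, ?_⟩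
    exact ((Classical.choose_spec (hL.exists_unique_point m (hmem m hm) ℓ₀ h₀ (key m hm))).2 x
      ⟨hxm, hx⟩).symm

lemma pp_card_P (hL : IsProjectivePlane q L) [Fintype P] :
    Fintype.card P = q ^ 2 + q + 1 := by
  classical
  obtain ⟨a, b, c, d, hab, hac, had, hbc, hbd, hcd, hquad⟩ := hL.nondeg
  obtain ⟨ℓ₀, ⟨hℓ₀, haℓ, hbℓ⟩, -⟩ := hL.exists_unique_line a b hab
  have hScard : ({a, b, c, d} : Finset P).card = 4 := by
    rw [Finset.card_insert_of_notMem (by simp [hab, hac, had]),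
      Finset.card_insert_of_notMem (by simp [hbc, hbd]),
      Finset.card_insert_of_notMem (by simp [hcd]), Finset.card_singleton]
  have hnsub : ¬ ({a, b, c, d} : Finset P) ⊆ ℓ₀ := by
    intro h
    have : (ℓ₀ ∩ ({a, b, c, d} : Finset P)).card = 4 := by
      rw [Finset.inter_eq_right.mpr h, hScard]
    have := hquad ℓ₀ hℓ₀
    omega
  obtain ⟨p, -, hp⟩ := Finset.not_subset.mp hnsub
  -- partition of points ≠ p into lines through p
  have hdisj : ∀ m₁ ∈ L.filter (fun m => p ∈ m), ∀ m₂ ∈ L.filter (fun m => p ∈ m),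
      m₁ ≠ m₂ → Disjoint (m₁.erase p) (m₂.erase p) := by
    intro m₁ hm₁ m₂ hm₂ hne
    rw [Finset.disjoint_left]
    intro y hy₁ hy₂
    have hy₁' := Finset.mem_erase.mp hy₁
    have hy₂' := Finset.mem_erase.mp hy₂
    exact hne (pp_line_unique hL (mem_filter.mp hm₁).1 (mem_filter.mp hm₂).1
      (Ne.symm hy₁'.1) (mem_filter.mp hm₁).2 hy₁'.2 (mem_filter.mp hm₂).2 hy₂'.2)
  have hU : (L.filter (fun m => p ∈ m)).biUnion (fun m => m.erase p) = Finset.univ.erase p := by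
    ext y
    simp only [Finset.mem_biUnion, Finset.mem_erase, Finset.mem_univ, and_true]
    constructor
    · rintro ⟨m, hm, hyne, hym⟩
      exact hyne
    · intro hy
      obtain ⟨m, ⟨hmL, hpm, hym⟩, -⟩ := hL.exists_unique_line p y (Ne.symm hy)
      exact ⟨m, mem_filter.mpr ⟨hmL, hpm⟩, hy, hym⟩
  have hcard := congrArg Finset.card hU
  rw [Finset.card_biUnion hdisj] at hcard
  have hsum : ∑ m ∈ L.filter (fun m => p ∈ m), (m.erase p).card
      = (L.filter (fun m => p ∈ m)).card * q := by
    rw [Finset.sum_congr rfl (fun m hm => ?_), Finset.sum_const, smul_eq_mul]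
    rw [Finset.card_erase_of_mem (mem_filter.mp hm).2, hL.card_line m (mem_filter.mp hm).1]
    omega
  rw [hsum] at hcard
  rw [pp_lines_through_card hL hℓ₀ hp] at hcard
  rw [Finset.card_erase_of_mem (Finset.mem_univ p), Finset.card_univ] at hcard
  have hpos : 1 ≤ Fintype.card P := Fintype.card_pos_iff.mpr ⟨p⟩
  have hsq : q ^ 2 = q * q := sq q
  have hlin : (q + 1) * q = q * q + q := by ring
  omega
end PP

section PB
variable {q : ℕ} {P : Type} [DecidableEq P] {L : Finset (Finset P)} {B : Finset (Finset P)}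

lemma indicator_sum (o : Finset P) [Fintype P] :
    ∑ p : P, (if p ∈ o then 1 else 0) = o.card := by
  rw [← Finset.card_filter]
  congr 1
  ext x
  simp

lemma pb_point_count [Fintype P] (hL : IsProjectivePlane q L) (hB : IsProjectiveBundle q L B)
    (p : P) : (B.filter (fun o => p ∈ o)).card = q + 1 := by
  classical
  set r : P → ℕ := fun p => (B.filter (fun o => p ∈ o)).card with hr
  have hrdef : ∀ p, r p = ∑ o ∈ B, if p ∈ o then 1 else 0 := fun p => Finset.card_filter _ _
  have sum1 : ∑ p : P, r p = (q ^ 2 + q + 1) * (q + 1) := by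
    calc ∑ p : P, r p = ∑ p : P, ∑ o ∈ B, (if p ∈ o then 1 else 0) :=
          Finset.sum_congr rfl (fun p _ => hrdef p)
      _ = ∑ o ∈ B, ∑ p : P, (if p ∈ o then 1 else 0) := Finset.sum_comm
      _ = ∑ o ∈ B, o.card := Finset.sum_congr rfl (fun o _ => indicator_sum o)
      _ = ∑ o ∈ B, (q + 1) := Finset.sum_congr rfl (fun o ho => (hB.2.1 o ho).1)
      _ = B.card * (q + 1) := by rw [Finset.sum_const, smul_eq_mul]
      _ = (q ^ 2 + q + 1) * (q + 1) := by rw [hB.1]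
  have sum2 : ∑ p : P, (r p) ^ 2 = (q ^ 2 + q + 1) * (q + 1) ^ 2 := by
    have step1 : ∀ p : P, (r p) ^ 2 = ∑ o₁ ∈ B, ∑ o₂ ∈ B, (if p ∈ o₁ ∩ o₂ then 1 else 0) := by
      intro p
      rw [sq, hrdef p, Finset.sum_mul_sum]
      refine Finset.sum_congr rfl fun o₁ _ => Finset.sum_congr rfl fun o₂ _ => ?_
      by_cases h₁ : p ∈ o₁ <;> by_cases h₂ : p ∈ o₂ <;> simp [h₁, h₂, Finset.mem_inter]
    calc ∑ p : P, (r p) ^ 2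
        = ∑ p : P, ∑ o₁ ∈ B, ∑ o₂ ∈ B, (if p ∈ o₁ ∩ o₂ then 1 else 0) :=
          Finset.sum_congr rfl (fun p _ => step1 p)
      _ = ∑ o₁ ∈ B, ∑ p : P, ∑ o₂ ∈ B, (if p ∈ o₁ ∩ o₂ then 1 else 0) := Finset.sum_comm
      _ = ∑ o₁ ∈ B, ∑ o₂ ∈ B, ∑ p : P, (if p ∈ o₁ ∩ o₂ then 1 else 0) :=
          Finset.sum_congr rfl (fun o₁ _ => Finset.sum_comm)
      _ = ∑ o₁ ∈ B, ∑ o₂ ∈ B, (o₁ ∩ o₂).card :=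
          Finset.sum_congr rfl (fun o₁ _ => Finset.sum_congr rfl (fun o₂ _ => indicator_sum _))
      _ = ∑ o₁ ∈ B, ((q + 1) + (q ^ 2 + q)) := by
          refine Finset.sum_congr rfl fun o₁ ho₁ => ?_
          rw [← Finset.add_sum_erase B _ ho₁, Finset.inter_self]
          congr 1
          · exact (hB.2.1 o₁ ho₁).1
          · calc ∑ o₂ ∈ B.erase o₁, (o₁ ∩ o₂).card = ∑ o₂ ∈ B.erase o₁, 1 :=
                  Finset.sum_congr rfl (fun o₂ ho₂ => hB.2.2 o₁ ho₁ o₂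
                    (Finset.mem_of_mem_erase ho₂) (Ne.symm (Finset.ne_of_mem_erase ho₂)))
              _ = (B.erase o₁).card := by rw [Finset.sum_const, smul_eq_mul, mul_one]
              _ = q ^ 2 + q := by rw [Finset.card_erase_of_mem ho₁, hB.1]; omega
      _ = B.card * ((q + 1) + (q ^ 2 + q)) := by rw [Finset.sum_const, smul_eq_mul]
      _ = (q ^ 2 + q + 1) * (q + 1) ^ 2 := by rw [hB.1]; ring
  have hcardP := pp_card_P hL
  have e1 : ∑ p : P, (r p : ℤ) = ((q : ℤ) ^ 2 + q + 1) * ((q : ℤ) + 1) := by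
    exact_mod_cast congrArg (Nat.cast : ℕ → ℤ) sum1
  have e2 : ∑ p : P, ((r p : ℤ)) ^ 2 = ((q : ℤ) ^ 2 + q + 1) * ((q : ℤ) + 1) ^ 2 := by
    exact_mod_cast congrArg (Nat.cast : ℕ → ℤ) sum2
  have hzero : ∑ p : P, ((r p : ℤ) - ((q : ℤ) + 1)) ^ 2 = 0 := by
    have expand : ∀ p : P, ((r p : ℤ) - ((q : ℤ) + 1)) ^ 2
        = (r p : ℤ) ^ 2 - 2 * ((q : ℤ) + 1) * (r p : ℤ) + ((q : ℤ) + 1) ^ 2 := fun p => by ring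
    rw [Finset.sum_congr rfl (fun p _ => expand p), Finset.sum_add_distrib,
      Finset.sum_sub_distrib, ← Finset.mul_sum, Finset.sum_const, Finset.card_univ, hcardP,
      e1, e2]
    ring
  have hp := (Finset.sum_eq_zero_iff_of_nonneg (fun p _ => sq_nonneg _)).mp hzero p
    (Finset.mem_univ p)
  have : (r p : ℤ) = (q : ℤ) + 1 := by
    have := sq_eq_zero_iff.mp hp
    omega
  exact_mod_cast this

lemma pb_oval_unique (hB : IsProjectiveBundle q L B) {o₁ o₂ : Finset P} (h₁ : o₁ ∈ B)
    (h₂ : o₂ ∈ B) {x y : P} (hxy : x ≠ y) (hx1 : x ∈ o₁) (hy1 : y ∈ o₁) (hx2 : x ∈ o₂)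
    (hy2 : y ∈ o₂) : o₁ = o₂ := by
  by_contra hne
  have h1 := hB.2.2 o₁ h₁ o₂ h₂ hne
  have h2 : 1 < (o₁ ∩ o₂).card := Finset.one_lt_card.mpr
    ⟨x, Finset.mem_inter.mpr ⟨hx1, hx2⟩, y, Finset.mem_inter.mpr ⟨hy1, hy2⟩, hxy⟩
  omega

lemma pb_exists_oval [Fintype P] (hL : IsProjectivePlane q L) (hB : IsProjectiveBundle q L B)
    {R S : P} (hRS : S ≠ R) : ∃ o, o ∈ B ∧ R ∈ o ∧ S ∈ o := by
  classical
  have hBR : (B.filter (fun o => R ∈ o)).card = q + 1 := pb_point_count hL hB R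
  have hdisj : ∀ o₁ ∈ B.filter (fun o => R ∈ o), ∀ o₂ ∈ B.filter (fun o => R ∈ o),
      o₁ ≠ o₂ → Disjoint (o₁.erase R) (o₂.erase R) := by
    intro o₁ h₁ o₂ h₂ hne
    rw [Finset.disjoint_left]
    intro y hy₁ hy₂
    have hy₁' := Finset.mem_erase.mp hy₁
    have hy₂' := Finset.mem_erase.mp hy₂
    exact hne (pb_oval_unique hB (Finset.mem_filter.mp h₁).1 (Finset.mem_filter.mp h₂).1
      (Ne.symm hy₁'.1) (Finset.mem_filter.mp h₁).2 hy₁'.2 (Finset.mem_filter.mp h₂).2 hy₂'.2)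
  set U := (B.filter (fun o => R ∈ o)).biUnion (fun o => o.erase R) with hUdef
  have hUcard : U.card = (q + 1) * q := by
    rw [hUdef, Finset.card_biUnion hdisj]
    rw [Finset.sum_congr rfl (fun o ho => ?_), Finset.sum_const, smul_eq_mul, hBR]
    rw [Finset.card_erase_of_mem (Finset.mem_filter.mp ho).2,
      (hB.2.1 o (Finset.mem_filter.mp ho).1).1]
    omega
  have hsub : U ⊆ Finset.univ.erase R := by
    intro y hy
    obtain ⟨o, ho, hyo⟩ := Finset.mem_biUnion.mp hy
    exact Finset.mem_erase.mpr ⟨(Finset.mem_erase.mp hyo).1, Finset.mem_univ y⟩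
  have hUeq : U = Finset.univ.erase R := by
    refine Finset.eq_of_subset_of_card_le hsub ?_
    rw [hUcard, Finset.card_erase_of_mem (Finset.mem_univ R), Finset.card_univ, pp_card_P hL]
    have hsq : q ^ 2 = q * q := sq q
    have : (q + 1) * q = q * q + q := by ring
    omega
  have hSU : S ∈ U := by
    rw [hUeq]
    exact Finset.mem_erase.mpr ⟨hRS, Finset.mem_univ S⟩
  obtain ⟨o, ho, hSo⟩ := Finset.mem_biUnion.mp hSU
  exact ⟨o, (Finset.mem_filter.mp ho).1,
    (Finset.mem_filter.mp ho).2, (Finset.mem_erase.mp hSo).2⟩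
end PB

/-- Given a projective bundle `B` in a finite projective plane of order `q ≥ 2`
and a line `ℓ`, for every point `R` of `ℓ` there is exactly one oval of `B` meeting `ℓ`
exactly in `R`; consequently `ℓ` has exactly `q + 1` tangent ovals in `B`, one at each of
its points. -/
theorem statement_8 (q : ℕ) (hq : 2 ≤ q) (P : Type) [Fintype P] [DecidableEq P]
    (L : Finset (Finset P)) (hL : IsProjectivePlane q L)
    (B : Finset (Finset P)) (hB : IsProjectiveBundle q L B)
    (ℓ : Finset P) (hℓ : ℓ ∈ L) :
    (∀ R ∈ ℓ, ∃! o, o ∈ B ∧ o ∩ ℓ = {R}) ∧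
    (B.filter fun o => (o ∩ ℓ).card = 1).card = q + 1 := by
  classical
  have hsec : ∀ o ∈ B, (o ∩ ℓ).card ≤ 2 := by
    intro o ho
    rw [Finset.inter_comm]
    exact (hB.2.1 o ho).2 ℓ hℓ
  -- key: for each R ∈ ℓ, exactly one tangent oval at R
  have key : ∀ R ∈ ℓ, (B.filter (fun o => o ∩ ℓ = {R})).card = 1 := by
    intro R hR
    have hBR : (B.filter (fun o => R ∈ o)).card = q + 1 := pb_point_count hL hB R
    have hsplit : (B.filter (fun o => R ∈ o)).filter (fun o => o ∩ ℓ = {R})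
        = B.filter (fun o => o ∩ ℓ = {R}) := by
      ext o
      simp only [Finset.mem_filter]
      constructor
      · rintro ⟨⟨h1, -⟩, h3⟩; exact ⟨h1, h3⟩
      · rintro ⟨h1, h3⟩
        refine ⟨⟨h1, ?_⟩, h3⟩
        have : R ∈ o ∩ ℓ := by rw [h3]; exact Finset.mem_singleton_self R
        exact (Finset.mem_inter.mp this).1
    -- secant ovals through R are in bijection with ℓ.erase R
    have hsecant : ((B.filter (fun o => R ∈ o)).filter (fun o => ¬ o ∩ ℓ = {R})).card = q := by
      have hcard_target : (ℓ.erase R).card = q := by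
        rw [Finset.card_erase_of_mem hR, hL.card_line ℓ hℓ]
        omega
      rw [← hcard_target]
      have hne : ∀ S ∈ ℓ.erase R, S ≠ R := fun S hS => (Finset.mem_erase.mp hS).1
      refine (Finset.card_bij
        (fun S hS => Classical.choose (pb_exists_oval hL hB (hne S hS))) ?_ ?_ ?_).symm
      · intro S hS
        obtain ⟨hoB, hRo, hSo⟩ := Classical.choose_spec (pb_exists_oval hL hB (hne S hS))
        refine Finset.mem_filter.mpr ⟨Finset.mem_filter.mpr ⟨hoB, hRo⟩, fun h => ?_⟩
        have h' : Classical.choose (pb_exists_oval hL hB (hne S hS)) ∩ ℓ = {R} := h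
        have hmem : S ∈ Classical.choose (pb_exists_oval hL hB (hne S hS)) ∩ ℓ :=
          Finset.mem_inter.mpr ⟨hSo, (Finset.mem_erase.mp hS).2⟩
        rw [h'] at hmem
        exact hne S hS (Finset.mem_singleton.mp hmem)
      · intro S₁ hS₁ S₂ hS₂ heq
        have heq' : Classical.choose (pb_exists_oval hL hB (hne S₁ hS₁))
            = Classical.choose (pb_exists_oval hL hB (hne S₂ hS₂)) := heq
        obtain ⟨hoB, hRo, hS1o⟩ := Classical.choose_spec (pb_exists_oval hL hB (hne S₁ hS₁))
        obtain ⟨-, -, hS2o⟩ := Classical.choose_spec (pb_exists_oval hL hB (hne S₂ hS₂))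
        by_contra hne12
        have hsub : ({R, S₁, S₂} : Finset P)
            ⊆ Classical.choose (pb_exists_oval hL hB (hne S₁ hS₁)) ∩ ℓ := by
          intro x hx
          simp only [Finset.mem_insert, Finset.mem_singleton] at hx
          rcases hx with rfl | rfl | rfl
          · exact Finset.mem_inter.mpr ⟨hRo, hR⟩
          · exact Finset.mem_inter.mpr ⟨hS1o, (Finset.mem_erase.mp hS₁).2⟩
          · refine Finset.mem_inter.mpr ⟨?_, (Finset.mem_erase.mp hS₂).2⟩
            rw [heq']
            exact hS2o
        have hcard3 : ({R, S₁, S₂} : Finset P).card = 3 := by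
          rw [Finset.card_insert_of_notMem ?hR, Finset.card_insert_of_notMem ?hS,
            Finset.card_singleton]
          case hR =>
            simp only [Finset.mem_insert, Finset.mem_singleton]
            push_neg
            exact ⟨fun h => hne S₁ hS₁ h.symm, fun h => hne S₂ hS₂ h.symm⟩
          case hS =>
            simp only [Finset.mem_singleton]
            exact hne12
        have hle := Finset.card_le_card hsub
        have h2 := hsec _ hoB
        omega
      · intro o ho
        obtain ⟨ho', hneq⟩ := Finset.mem_filter.mp ho
        obtain ⟨hoB, hRo⟩ := Finset.mem_filter.mp ho'
        have hRmem : R ∈ o ∩ ℓ := Finset.mem_inter.mpr ⟨hRo, hR⟩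
        have hnsub : ¬ o ∩ ℓ ⊆ {R} := by
          intro h
          exact hneq (Finset.Subset.antisymm h (Finset.singleton_subset_iff.mpr hRmem))
        obtain ⟨S, hSm, hSR⟩ := Finset.not_subset.mp hnsub
        rw [Finset.mem_singleton] at hSR
        have hSℓ : S ∈ ℓ.erase R := Finset.mem_erase.mpr ⟨hSR, (Finset.mem_inter.mp hSm).2⟩
        refine ⟨S, hSℓ, ?_⟩
        obtain ⟨hoB', hRo', hSo'⟩ := Classical.choose_spec (pb_exists_oval hL hB (hne S hSℓ))
        exact pb_oval_unique hB hoB' hoB (show R ≠ S from fun h => hSR h.symm)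
          hRo' hSo' hRo (Finset.mem_inter.mp hSm).1
    have := Finset.card_filter_add_card_filter_not
      (s := B.filter (fun o => R ∈ o)) (p := fun o => o ∩ ℓ = {R})
    rw [hsplit, hsecant, hBR] at this
    omega
  constructor
  · intro R hR
    obtain ⟨o, ho⟩ := Finset.card_eq_one.mp (key R hR)
    have hoT : o ∈ B.filter (fun o => o ∩ ℓ = {R}) := by
      rw [ho]; exact Finset.mem_singleton_self o
    refine ⟨o, ⟨(Finset.mem_filter.mp hoT).1, (Finset.mem_filter.mp hoT).2⟩, ?_⟩
    intro o' ⟨h1, h2⟩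
    have : o' ∈ B.filter (fun o => o ∩ ℓ = {R}) := Finset.mem_filter.mpr ⟨h1, h2⟩
    rw [ho] at this
    exact Finset.mem_singleton.mp this
  · have hrw : B.filter (fun o => (o ∩ ℓ).card = 1)
        = ℓ.biUnion (fun R => B.filter (fun o => o ∩ ℓ = {R})) := by
      ext o
      simp only [Finset.mem_filter, Finset.mem_biUnion]
      constructor
      · rintro ⟨hoB, hc⟩
        obtain ⟨x, hx⟩ := Finset.card_eq_one.mp hc
        have hxm : x ∈ o ∩ ℓ := by rw [hx]; exact Finset.mem_singleton_self x
        exact ⟨x, (Finset.mem_inter.mp hxm).2, hoB, hx⟩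
      · rintro ⟨R, hR, hoB, h⟩
        exact ⟨hoB, by rw [h]; exact Finset.card_singleton R⟩
    rw [hrw, Finset.card_biUnion ?disj]
    case disj =>
      intro R₁ h₁ R₂ h₂ hne
      rw [Function.onFun, Finset.disjoint_left]
      intro o ho₁ ho₂
      have e₁ := (Finset.mem_filter.mp ho₁).2
      have e₂ := (Finset.mem_filter.mp ho₂).2
      rw [e₁] at e₂
      exact hne (Finset.singleton_injective e₂)
    rw [Finset.sum_congr rfl (fun R hR => key R hR), Finset.sum_const, smul_eq_mul, mul_one,
      hL.card_line ℓ hℓ]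
end
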